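/- arXiv:1103.1409 — 8 statements merged into one kernel-verified Lean document; each statement's English description precedes it below -/
import Mathlib

section
/- Let n, p ∈ ℕ and A, B ∈ ℝ^{p×n}. Then: (a) ⟨Bᵀu, Aᵀu⟩ > 0 for every nonzero u ∈ V₊(BAᵀ); (b) ⟨Bᵀu, Aᵀu⟩ ≥ 0 for every u ∈ V₊(BAᵀ) + V₀(BAᵀ); (c) ⟨Bᵀu, −Aᵀu⟩ > 0 for every nonzero u ∈ V₋(BAᵀ); (d) ⟨Bᵀu, −Aᵀu⟩ ≥ 0 for every u ∈ V₋(BAᵀ) + V₀(BAᵀ). Consequently the set {(Bᵀu, Aᵀu) : u ∈ V₊(BAᵀ) + V₀(BAᵀ)} is a monotone subset of ℝⁿ × ℝⁿ and the set {(Bᵀu, −Aᵀu) : u ∈ V₋(BAᵀ) + V₀(BAᵀ)} is a monotone subset of ℝⁿ × ℝⁿ. -/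
open Matrix Pointwise

/-- Sum of the eigenspaces of `M + Mᵀ` corresponding to positive eigenvalues. -/
noncomputable def Vpos {m : ℕ} (M : Matrix (Fin m) (Fin m) ℝ) :
    Submodule ℝ (Fin m → ℝ) :=
  ⨆ μ : {t : ℝ // 0 < t}, Module.End.eigenspace (Matrix.mulVecLin (M + Mᵀ)) (μ : ℝ)

/-- Eigenspace of `M + Mᵀ` for the eigenvalue `0`. -/
noncomputable def Vzero {m : ℕ} (M : Matrix (Fin m) (Fin m) ℝ) :
    Submodule ℝ (Fin m → ℝ) :=
  Module.End.eigenspace (Matrix.mulVecLin (M + Mᵀ)) 0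

/-- Sum of the eigenspaces of `M + Mᵀ` corresponding to negative eigenvalues. -/
noncomputable def Vneg {m : ℕ} (M : Matrix (Fin m) (Fin m) ℝ) :
    Submodule ℝ (Fin m → ℝ) :=
  ⨆ μ : {t : ℝ // t < 0}, Module.End.eigenspace (Matrix.mulVecLin (M + Mᵀ)) (μ : ℝ)

/-- A set `S ⊆ ℝⁿ × ℝⁿ` is monotone. -/
def IsMonotoneSet {n : ℕ} (S : Set ((Fin n → ℝ) × (Fin n → ℝ))) : Prop :=
  ∀ a ∈ S, ∀ b ∈ S, 0 ≤ (a.1 - b.1) ⬝ᵥ (a.2 - b.2)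

/-- A set `S ⊆ ℝⁿ × ℝⁿ` is maximally monotone. -/
def IsMaxMonotoneSet {n : ℕ} (S : Set ((Fin n → ℝ) × (Fin n → ℝ))) : Prop :=
  IsMonotoneSet S ∧ ∀ a, (∀ b ∈ S, 0 ≤ (a.1 - b.1) ⬝ᵥ (a.2 - b.2)) → a ∈ S

/-- Graph of the adjoint relation: `(x, x*) ∈ gra T*` iff `(x*, -x) ⟂ gra T`. -/
def adjGraph {n : ℕ} (S : Set ((Fin n → ℝ) × (Fin n → ℝ))) :
    Set ((Fin n → ℝ) × (Fin n → ℝ)) :=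
  {q | ∀ s ∈ S, q.2 ⬝ᵥ s.1 - q.1 ⬝ᵥ s.2 = 0}

lemma sum_dot {m : ℕ} {k : Type*} (s : Finset k) (v : k → Fin m → ℝ) (w : Fin m → ℝ) :
    (∑ i ∈ s, v i) ⬝ᵥ w = ∑ i ∈ s, v i ⬝ᵥ w := by
  simp only [dotProduct, Finset.sum_apply, Finset.sum_mul]
  exact Finset.sum_comm

lemma dot_sum {m : ℕ} {k : Type*} (s : Finset k) (v : k → Fin m → ℝ) (w : Fin m → ℝ) :
    w ⬝ᵥ (∑ i ∈ s, v i) = ∑ i ∈ s, w ⬝ᵥ v i := by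
  simp only [dotProduct, Finset.sum_apply, Finset.mul_sum]
  exact Finset.sum_comm

lemma mulVec_sum' {m : ℕ} {k : Type*} (S : Matrix (Fin m) (Fin m) ℝ) (s : Finset k)
    (v : k → Fin m → ℝ) : S *ᵥ (∑ i ∈ s, v i) = ∑ i ∈ s, S *ᵥ v i := by
  have h := map_sum S.mulVecLin v s
  simp only [Matrix.mulVecLin_apply] at h
  exact h

lemma dot_self_nonneg' {m : ℕ} (v : Fin m → ℝ) : 0 ≤ v ⬝ᵥ v :=
  Finset.sum_nonneg fun i _ => mul_self_nonneg (v i)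

lemma dot_self_pos' {m : ℕ} {v : Fin m → ℝ} (hv : v ≠ 0) : 0 < v ⬝ᵥ v :=
  lt_of_le_of_ne (dot_self_nonneg' v)
    (fun h => hv (dotProduct_self_eq_zero.mp h.symm))

/-- Decomposition of the quadratic form over a sup of eigenspaces of a symmetric matrix. -/
lemma quad_decomp {m : ℕ} (S : Matrix (Fin m) (Fin m) ℝ) (hS : Sᵀ = S)
    (P : Set ℝ) (u : Fin m → ℝ)
    (hu : u ∈ ⨆ μ : P, Module.End.eigenspace S.mulVecLin (μ : ℝ)) :
    ∃ f : P →₀ (Fin m → ℝ), (f.sum fun _ x => x) = u ∧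
      u ⬝ᵥ (S *ᵥ u) = ∑ i ∈ f.support, (i : ℝ) * (f i ⬝ᵥ f i) := by
  obtain ⟨f, hfmem, hfsum⟩ := (Submodule.mem_iSup_iff_exists_finsupp _ _).mp hu
  refine ⟨f, hfsum, ?_⟩
  have heig : ∀ i : P, S *ᵥ f i = (i : ℝ) • f i := fun i => by
    have := hfmem i
    rwa [Module.End.mem_eigenspace_iff, Matrix.mulVecLin_apply] at this
  have hsymm : ∀ x y : Fin m → ℝ, (S *ᵥ x) ⬝ᵥ y = x ⬝ᵥ (S *ᵥ y) := by
    intro x y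
    rw [Matrix.dotProduct_mulVec, ← Matrix.vecMul_transpose, hS]
  have horth : ∀ i j : P, i ≠ j → f i ⬝ᵥ f j = 0 := by
    intro i j hij
    have h1 : (i : ℝ) * (f i ⬝ᵥ f j) = (j : ℝ) * (f i ⬝ᵥ f j) := by
      calc (i : ℝ) * (f i ⬝ᵥ f j) = ((i : ℝ) • f i) ⬝ᵥ f j := by
            rw [smul_dotProduct]; rfl
        _ = (S *ᵥ f i) ⬝ᵥ f j := by rw [heig]
        _ = f i ⬝ᵥ (S *ᵥ f j) := hsymm _ _
        _ = f i ⬝ᵥ ((j : ℝ) • f j) := by rw [heig]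
        _ = (j : ℝ) * (f i ⬝ᵥ f j) := by rw [dotProduct_smul]; rfl
    have h2 : ((i : ℝ) - j) * (f i ⬝ᵥ f j) = 0 := by ring_nf; linarith
    rcases mul_eq_zero.mp h2 with h | h
    · exact absurd (Subtype.ext (by linarith [sub_eq_zero.mp h])) hij
    · exact h
  have hfs : u = ∑ i ∈ f.support, f i := by rw [← hfsum]; rfl
  calc u ⬝ᵥ (S *ᵥ u)
      = ∑ i ∈ f.support, ∑ j ∈ f.support, f i ⬝ᵥ (S *ᵥ f j) := by
        rw [hfs, mulVec_sum', sum_dot]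
        exact Finset.sum_congr rfl fun i _ => dot_sum _ _ _
    _ = ∑ i ∈ f.support, ∑ j ∈ f.support, (j : ℝ) * (f i ⬝ᵥ f j) := by
        refine Finset.sum_congr rfl fun i _ => Finset.sum_congr rfl fun j _ => ?_
        rw [heig, dotProduct_smul]; rfl
    _ = ∑ i ∈ f.support, (i : ℝ) * (f i ⬝ᵥ f i) := by
        refine Finset.sum_congr rfl fun i hi => ?_
        refine Finset.sum_eq_single_of_mem i hi fun j _ hj => ?_
        rw [horth i j (fun h => hj h.symm), mul_zero]

lemma quad_nonneg {m : ℕ} (S : Matrix (Fin m) (Fin m) ℝ) (hS : Sᵀ = S)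
    (P : Set ℝ) (hP : ∀ μ : P, 0 ≤ (μ : ℝ)) (u : Fin m → ℝ)
    (hu : u ∈ ⨆ μ : P, Module.End.eigenspace S.mulVecLin (μ : ℝ)) :
    0 ≤ u ⬝ᵥ (S *ᵥ u) := by
  obtain ⟨f, -, hq⟩ := quad_decomp S hS P u hu
  rw [hq]
  exact Finset.sum_nonneg fun i _ => mul_nonneg (hP i) (dot_self_nonneg' _)

lemma quad_pos {m : ℕ} (S : Matrix (Fin m) (Fin m) ℝ) (hS : Sᵀ = S)
    (P : Set ℝ) (hP : ∀ μ : P, 0 < (μ : ℝ)) (u : Fin m → ℝ)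
    (hu : u ∈ ⨆ μ : P, Module.End.eigenspace S.mulVecLin (μ : ℝ)) (hu0 : u ≠ 0) :
    0 < u ⬝ᵥ (S *ᵥ u) := by
  obtain ⟨f, hsum, hq⟩ := quad_decomp S hS P u hu
  rw [hq]
  have hfne : f ≠ 0 := by rintro rfl; simp [Finsupp.sum] at hsum; exact hu0 hsum.symm
  obtain ⟨i, hi⟩ := Finsupp.support_nonempty_iff.mpr hfne
  refine Finset.sum_pos' (fun j _ => mul_nonneg (hP j).le (dot_self_nonneg' _)) ⟨i, hi, ?_⟩
  exact mul_pos (hP i) (dot_self_pos' (Finsupp.mem_support_iff.mp hi))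

/-- sign properties of `⟨Bᵀu, ±Aᵀu⟩` on the eigenspace sums of `BAᵀ`,
and monotonicity of the corresponding subsets of `ℝⁿ × ℝⁿ`. -/
theorem stmt2 {n p : ℕ} (A B : Matrix (Fin p) (Fin n) ℝ) :
    (∀ u ∈ Vpos (B * Aᵀ), u ≠ 0 → 0 < (Bᵀ *ᵥ u) ⬝ᵥ (Aᵀ *ᵥ u)) ∧
    (∀ u ∈ Vpos (B * Aᵀ) ⊔ Vzero (B * Aᵀ), 0 ≤ (Bᵀ *ᵥ u) ⬝ᵥ (Aᵀ *ᵥ u)) ∧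
    (∀ u ∈ Vneg (B * Aᵀ), u ≠ 0 → 0 < (Bᵀ *ᵥ u) ⬝ᵥ (-(Aᵀ *ᵥ u))) ∧
    (∀ u ∈ Vneg (B * Aᵀ) ⊔ Vzero (B * Aᵀ), 0 ≤ (Bᵀ *ᵥ u) ⬝ᵥ (-(Aᵀ *ᵥ u))) ∧
    IsMonotoneSet ((fun u => (Bᵀ *ᵥ u, Aᵀ *ᵥ u)) ''
      ↑(Vpos (B * Aᵀ) ⊔ Vzero (B * Aᵀ))) ∧
    IsMonotoneSet ((fun u => (Bᵀ *ᵥ u, -(Aᵀ *ᵥ u))) ''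
      ↑(Vneg (B * Aᵀ) ⊔ Vzero (B * Aᵀ))) := by
  set M : Matrix (Fin p) (Fin p) ℝ := B * Aᵀ with hM
  set S : Matrix (Fin p) (Fin p) ℝ := M + Mᵀ with hSdef
  have hS : Sᵀ = S := by
    rw [hSdef, Matrix.transpose_add, Matrix.transpose_transpose, add_comm]
  -- the key quadratic-form identity
  have hid : ∀ u : Fin p → ℝ, u ⬝ᵥ (S *ᵥ u) = 2 * ((Bᵀ *ᵥ u) ⬝ᵥ (Aᵀ *ᵥ u)) := by
    intro u
    have h1 : u ⬝ᵥ (M *ᵥ u) = (Bᵀ *ᵥ u) ⬝ᵥ (Aᵀ *ᵥ u) := by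
      rw [hM, ← Matrix.mulVec_mulVec, Matrix.dotProduct_mulVec,
        ← Matrix.mulVec_transpose]
    have h2 : u ⬝ᵥ (Mᵀ *ᵥ u) = u ⬝ᵥ (M *ᵥ u) := by
      rw [Matrix.dotProduct_mulVec, Matrix.vecMul_transpose, dotProduct_comm]
    rw [hSdef, Matrix.add_mulVec, dotProduct_add, h1, h2, h1]; ring
  -- memberships in big sups
  have hposle : Vpos M ⊔ Vzero M ≤
      ⨆ μ : ({t : ℝ | 0 ≤ t} : Set ℝ), Module.End.eigenspace S.mulVecLin (μ : ℝ) := by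
    refine sup_le (iSup_le fun μ => ?_) ?_
    · exact le_iSup (fun ν : ({t : ℝ | 0 ≤ t} : Set ℝ) =>
        Module.End.eigenspace S.mulVecLin (ν : ℝ)) ⟨μ.1, μ.2.le⟩
    · exact le_iSup (fun ν : ({t : ℝ | 0 ≤ t} : Set ℝ) =>
        Module.End.eigenspace S.mulVecLin (ν : ℝ)) ⟨0, by norm_num⟩
  have hnegle : Vneg M ⊔ Vzero M ≤
      ⨆ μ : ({t : ℝ | t ≤ 0} : Set ℝ), Module.End.eigenspace S.mulVecLin (μ : ℝ) := by
    refine sup_le (iSup_le fun μ => ?_) ?_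
    · exact le_iSup (fun ν : ({t : ℝ | t ≤ 0} : Set ℝ) =>
        Module.End.eigenspace S.mulVecLin (ν : ℝ)) ⟨μ.1, μ.2.le⟩
    · exact le_iSup (fun ν : ({t : ℝ | t ≤ 0} : Set ℝ) =>
        Module.End.eigenspace S.mulVecLin (ν : ℝ)) ⟨0, by norm_num⟩
  have hnegS : (-S)ᵀ = -S := by rw [Matrix.transpose_neg, hS]
  have hnegmem : ∀ u, u ∈ ⨆ μ : ({t : ℝ | t ≤ 0} : Set ℝ),
      Module.End.eigenspace S.mulVecLin (μ : ℝ) →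
      u ∈ ⨆ μ : ({t : ℝ | 0 ≤ t} : Set ℝ), Module.End.eigenspace (-S).mulVecLin (μ : ℝ) := by
    intro u hu
    have : (⨆ μ : ({t : ℝ | t ≤ 0} : Set ℝ), Module.End.eigenspace S.mulVecLin (μ : ℝ)) ≤
        ⨆ μ : ({t : ℝ | 0 ≤ t} : Set ℝ), Module.End.eigenspace (-S).mulVecLin (μ : ℝ) := by
      refine iSup_le fun μ => le_iSup_of_le ⟨-μ.1, show 0 ≤ -μ.1 from neg_nonneg.mpr μ.2⟩ ?_
      intro x hx
      rw [Module.End.mem_eigenspace_iff, Matrix.mulVecLin_apply] at hx ⊢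
      rw [Matrix.neg_mulVec, hx]
      simp
    exact this hu
  -- part (a)
  have parta : ∀ u ∈ Vpos M, u ≠ 0 → 0 < (Bᵀ *ᵥ u) ⬝ᵥ (Aᵀ *ᵥ u) := by
    intro u hu hu0
    have := quad_pos S hS {t : ℝ | 0 < t} (fun μ => μ.2) u hu hu0
    rw [hid u] at this; linarith
  -- part (b)
  have partb : ∀ u ∈ Vpos M ⊔ Vzero M, 0 ≤ (Bᵀ *ᵥ u) ⬝ᵥ (Aᵀ *ᵥ u) := by
    intro u hu
    have := quad_nonneg S hS {t : ℝ | 0 ≤ t} (fun μ => μ.2) u (hposle hu)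
    rw [hid u] at this; linarith
  -- neg identity
  have hidn : ∀ u : Fin p → ℝ, u ⬝ᵥ ((-S) *ᵥ u) = 2 * ((Bᵀ *ᵥ u) ⬝ᵥ (-(Aᵀ *ᵥ u))) := by
    intro u
    rw [Matrix.neg_mulVec, dotProduct_neg, hid u, dotProduct_neg]; ring
  -- part (c)
  have partc : ∀ u ∈ Vneg M, u ≠ 0 → 0 < (Bᵀ *ᵥ u) ⬝ᵥ (-(Aᵀ *ᵥ u)) := by
    intro u hu hu0
    have hmem : u ∈ ⨆ μ : ({t : ℝ | 0 < t} : Set ℝ),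
        Module.End.eigenspace (-S).mulVecLin (μ : ℝ) := by
      have hle : (Vneg M : Submodule ℝ (Fin p → ℝ)) ≤
          ⨆ μ : ({t : ℝ | 0 < t} : Set ℝ), Module.End.eigenspace (-S).mulVecLin (μ : ℝ) := by
        refine iSup_le fun μ => le_iSup_of_le ⟨-μ.1, show 0 < -μ.1 from neg_pos.mpr μ.2⟩ ?_
        intro x hx
        rw [Module.End.mem_eigenspace_iff, Matrix.mulVecLin_apply] at hx ⊢
        rw [Matrix.neg_mulVec, hx]
        simp
      exact hle hu
    have := quad_pos (-S) hnegS {t : ℝ | 0 < t} (fun μ => μ.2) u hmem hu0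
    rw [hidn u] at this; linarith
  -- part (d)
  have partd : ∀ u ∈ Vneg M ⊔ Vzero M, 0 ≤ (Bᵀ *ᵥ u) ⬝ᵥ (-(Aᵀ *ᵥ u)) := by
    intro u hu
    have := quad_nonneg (-S) hnegS {t : ℝ | 0 ≤ t} (fun μ => μ.2) u
      (hnegmem u (hnegle hu))
    rw [hidn u] at this; linarith
  refine ⟨parta, partb, partc, partd, ?_, ?_⟩
  · rintro a ⟨u, hu, rfl⟩ b ⟨v, hv, rfl⟩
    have h := partb (u - v) (sub_mem hu hv)
    simpa [Matrix.mulVec_sub] using h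
  · rintro a ⟨u, hu, rfl⟩ b ⟨v, hv, rfl⟩
    have h := partd (u - v) (sub_mem hu hv)
    have e : -(Aᵀ *ᵥ u) - -(Aᵀ *ᵥ v) = -(Aᵀ *ᵥ (u - v)) := by
      rw [Matrix.mulVec_sub]; ring_nf
    simpa [Matrix.mulVec_sub, e] using h
end

section
/- Let n, p ∈ ℕ, let A, B ∈ ℝ^{p×n}, assume the p×2n matrix (A B) has rank p, and let G be the linear relation with graph gra G = {(x,x*) ∈ ℝⁿ × ℝⁿ : Ax + Bx* = 0}. Then the adjoint G* is monotone if and only if the symmetric p×p matrix ABᵀ + BAᵀ is negative semidefinite. -/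
open Matrix Pointwise RealInnerProductSpace

/-- If `x` is (dot-)orthogonal to the kernel of `M`, then `x` is in the range of `Mᵀ`. -/
lemma key_rowspace {k l : Type*} [Fintype k] [Fintype l] [DecidableEq k] [DecidableEq l]
    (M : Matrix l k ℝ) (x : k → ℝ)
    (hx : ∀ v, M *ᵥ v = 0 → x ⬝ᵥ v = 0) : ∃ y, x = Mᵀ *ᵥ y := by
  classical
  set T := Matrix.toEuclideanLin M with hT
  set K := LinearMap.range (LinearMap.adjoint T) with hKdef
  have hK : Kᗮᗮ = K := Submodule.orthogonal_orthogonal K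
  have hx' : ((WithLp.equiv 2 (k → ℝ)).symm x : EuclideanSpace ℝ k) ∈ Kᗮᗮ := by
    rw [Submodule.mem_orthogonal]
    intro w hw
    have hTw : T w = 0 := by
      have h1 : (inner ℝ (T w) (T w) : ℝ) = 0 := by
        rw [← LinearMap.adjoint_inner_left]
        exact (Submodule.mem_orthogonal K w).mp hw _ ⟨T w, rfl⟩
      exact inner_self_eq_zero.mp h1
    have hMw : M *ᵥ (WithLp.equiv 2 (k → ℝ)) w = 0 := by
      have := congrArg (WithLp.equiv 2 (l → ℝ)) hTw
      rw [Matrix.toEuclideanLin_apply] at this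
      exact this
    have hdot := hx _ hMw
    have : (inner ℝ w ((WithLp.equiv 2 (k → ℝ)).symm x : EuclideanSpace ℝ k) : ℝ)
        = x ⬝ᵥ (WithLp.equiv 2 (k → ℝ)) w := by
      simp [PiLp.inner_apply, RCLike.inner_apply, dotProduct, mul_comm,
        WithLp.equiv_symm_apply, WithLp.equiv_apply]
    rw [this, hdot]
  rw [hK] at hx'
  obtain ⟨y, hy⟩ := hx'
  refine ⟨(WithLp.equiv 2 (l → ℝ)) y, ?_⟩
  have hadj : LinearMap.adjoint T = Matrix.toEuclideanLin Mᵀ := by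
    rw [← Matrix.toEuclideanLin_conjTranspose_eq_adjoint,
      Matrix.conjTranspose_eq_transpose_of_trivial]
  rw [hadj] at hy
  have := congrArg (WithLp.equiv 2 (k → ℝ)) hy
  rw [Matrix.toEuclideanLin_apply] at this
  exact this.symm

/-- Characterization of membership in the adjoint graph. -/
lemma adj_mem {n p : ℕ} (A B : Matrix (Fin p) (Fin n) ℝ)
    (q : (Fin n → ℝ) × (Fin n → ℝ)) :
    q ∈ adjGraph {q' : (Fin n → ℝ) × (Fin n → ℝ) | A *ᵥ q'.1 + B *ᵥ q'.2 = 0} ↔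
      ∃ y, q.1 = -(Bᵀ *ᵥ y) ∧ q.2 = Aᵀ *ᵥ y := by
  constructor
  · intro hq
    obtain ⟨y, hy⟩ := key_rowspace (Matrix.fromCols A B) (Sum.elim q.2 (-q.1)) (by
      intro v hv
      have hv' : A *ᵥ (v ∘ Sum.inl) + B *ᵥ (v ∘ Sum.inr) = 0 := by
        have : Matrix.fromCols A B *ᵥ Sum.elim (v ∘ Sum.inl) (v ∘ Sum.inr) = 0 := by
          rwa [Sum.elim_comp_inl_inr]
        rwa [Matrix.fromCols_mulVec_sumElim] at this
      have h2 := hq (v ∘ Sum.inl, v ∘ Sum.inr) hv'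
      have hveq : v = Sum.elim (v ∘ Sum.inl) (v ∘ Sum.inr) := (Sum.elim_comp_inl_inr v).symm
      rw [hveq, sumElim_dotProduct_sumElim, neg_dotProduct]
      simpa [sub_eq_add_neg] using h2)
    rw [Matrix.transpose_fromCols, Matrix.fromRows_mulVec] at hy
    refine ⟨y, ?_, ?_⟩
    · funext i
      have h := congrFun hy (Sum.inr i)
      simp only [Sum.elim_inr, Pi.neg_apply] at h
      simp only [Pi.neg_apply]
      linarith
    · exact funext fun i => congrFun hy (Sum.inl i)
  · rintro ⟨y, h1, h2⟩ s hs
    rw [h1, h2]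
    have e1 : (Aᵀ *ᵥ y) ⬝ᵥ s.1 = y ⬝ᵥ (A *ᵥ s.1) := by
      rw [Matrix.mulVec_transpose, ← Matrix.dotProduct_mulVec]
    have e2 : (Bᵀ *ᵥ y) ⬝ᵥ s.2 = y ⬝ᵥ (B *ᵥ s.2) := by
      rw [Matrix.mulVec_transpose, ← Matrix.dotProduct_mulVec]
    have : y ⬝ᵥ (A *ᵥ s.1) + y ⬝ᵥ (B *ᵥ s.2) = 0 := by
      rw [← dotProduct_add, hs, dotProduct_zero]
    rw [neg_dotProduct, e1, e2]
    linarith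

lemma quad_form {n p : ℕ} (A B : Matrix (Fin p) (Fin n) ℝ) (u : Fin p → ℝ) :
    u ⬝ᵥ (-(A * Bᵀ + B * Aᵀ)) *ᵥ u = 2 * ((-(Bᵀ *ᵥ u)) ⬝ᵥ (Aᵀ *ᵥ u)) := by
  have h1 : u ⬝ᵥ (A * Bᵀ) *ᵥ u = (Aᵀ *ᵥ u) ⬝ᵥ (Bᵀ *ᵥ u) := by
    rw [← Matrix.mulVec_mulVec, Matrix.dotProduct_mulVec, ← Matrix.mulVec_transpose]
  have h2 : u ⬝ᵥ (B * Aᵀ) *ᵥ u = (Bᵀ *ᵥ u) ⬝ᵥ (Aᵀ *ᵥ u) := by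
    rw [← Matrix.mulVec_mulVec, Matrix.dotProduct_mulVec, ← Matrix.mulVec_transpose]
  rw [Matrix.neg_mulVec, dotProduct_neg, Matrix.add_mulVec, dotProduct_add,
    h1, h2, neg_dotProduct, dotProduct_comm]
  ring

/-- if `(A B)` has rank `p` and `gra G = {(x,x*) : Ax + Bx* = 0}`,
then `G*` is monotone iff `ABᵀ + BAᵀ` is negative semidefinite. -/
theorem stmt6 {n p : ℕ} (A B : Matrix (Fin p) (Fin n) ℝ)
    (hrank : (Matrix.fromCols A B).rank = p) :
    IsMonotoneSet
        (adjGraph {q : (Fin n → ℝ) × (Fin n → ℝ) | A *ᵥ q.1 + B *ᵥ q.2 = 0}) ↔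
      (-(A * Bᵀ + B * Aᵀ)).PosSemidef := by
  constructor
  · intro hmono
    rw [Matrix.posSemidef_iff_dotProduct_mulVec]
    constructor
    · -- Hermitian
      rw [Matrix.IsHermitian, Matrix.conjTranspose_eq_transpose_of_trivial]
      simp [Matrix.transpose_add, Matrix.transpose_mul, add_comm]
    · intro u
      have ha : ((-(Bᵀ *ᵥ u), Aᵀ *ᵥ u) : (Fin n → ℝ) × (Fin n → ℝ)) ∈
          adjGraph {q : (Fin n → ℝ) × (Fin n → ℝ) | A *ᵥ q.1 + B *ᵥ q.2 = 0} :=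
        (adj_mem A B _).mpr ⟨u, rfl, rfl⟩
      have hb : ((0, 0) : (Fin n → ℝ) × (Fin n → ℝ)) ∈
          adjGraph {q : (Fin n → ℝ) × (Fin n → ℝ) | A *ᵥ q.1 + B *ᵥ q.2 = 0} :=
        (adj_mem A B _).mpr ⟨0, by simp, by simp⟩
      have := hmono _ ha _ hb
      simp only [sub_zero] at this
      rw [star_trivial, quad_form]
      linarith
  · intro hpsd a ha b hb
    obtain ⟨ya, ha1, ha2⟩ := (adj_mem A B a).mp ha
    obtain ⟨yb, hb1, hb2⟩ := (adj_mem A B b).mp hb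
    have h1 : a.1 - b.1 = -(Bᵀ *ᵥ (ya - yb)) := by
      rw [ha1, hb1, Matrix.mulVec_sub]; abel
    have h2 : a.2 - b.2 = Aᵀ *ᵥ (ya - yb) := by
      rw [ha2, hb2, Matrix.mulVec_sub]
    have := (Matrix.posSemidef_iff_dotProduct_mulVec.mp hpsd).2 (ya - yb)
    rw [star_trivial, quad_form] at this
    rw [h1, h2]
    linarith
end

section
/- Let n, p ∈ ℕ, let A, B ∈ ℝ^{p×n}, assume the p×2n matrix (A B) has rank p, and let G be the linear relation with graph gra G = {(x,x*) ∈ ℝⁿ × ℝⁿ : Ax + Bx* = 0}. If G is monotone, then n ≤ p. Moreover, assuming G is monotone, G is maximally monotone if and only if dim(gra G) = n and p = n. -/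
open Matrix Pointwise

/-- if `G` (with `gra G = {(x,x*) : Ax + Bx* = 0}` and `rank (A B) = p`)
is monotone then `n ≤ p`; moreover `G` is maximally monotone iff
`dim (gra G) = n` and `p = n`. -/
theorem stmt7 {n p : ℕ} (A B : Matrix (Fin p) (Fin n) ℝ)
    (hrank : (Matrix.fromCols A B).rank = p)
    (G : Submodule ℝ ((Fin n → ℝ) × (Fin n → ℝ)))
    (hG : (G : Set ((Fin n → ℝ) × (Fin n → ℝ))) =
      {q : (Fin n → ℝ) × (Fin n → ℝ) | A *ᵥ q.1 + B *ᵥ q.2 = 0})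
    (hmono : IsMonotoneSet (G : Set ((Fin n → ℝ) × (Fin n → ℝ)))) :
    n ≤ p ∧
    (IsMaxMonotoneSet (G : Set ((Fin n → ℝ) × (Fin n → ℝ))) ↔
      (Module.finrank ℝ G = n ∧ p = n)) := by
  classical
  -- the defining linear map
  set L : ((Fin n → ℝ) × (Fin n → ℝ)) →ₗ[ℝ] (Fin p → ℝ) :=
    A.mulVecLin ∘ₗ LinearMap.fst ℝ _ _ + B.mulVecLin ∘ₗ LinearMap.snd ℝ _ _ with hL
  have hLapp : ∀ q : (Fin n → ℝ) × (Fin n → ℝ), L q = A *ᵥ q.1 + B *ᵥ q.2 := fun q => rfl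
  have hGk : G = LinearMap.ker L := by
    ext q
    have := Set.ext_iff.mp hG q
    simpa [LinearMap.mem_ker, hLapp] using this
  -- L is surjective
  have hsurj : LinearMap.range L = ⊤ := by
    have he : L = (Matrix.fromCols A B).mulVecLin ∘ₗ
        (LinearEquiv.sumArrowLequivProdArrow (Fin n) (Fin n) ℝ ℝ).symm.toLinearMap := by
      apply LinearMap.ext; intro q
      have : ((LinearEquiv.sumArrowLequivProdArrow (Fin n) (Fin n) ℝ ℝ).symm q)
          = Sum.elim q.1 q.2 := by
        funext i; cases i <;> rfl
      simp [hLapp, this, Matrix.fromCols_mulVec_sumElim]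
    have hr : LinearMap.range L = LinearMap.range (Matrix.fromCols A B).mulVecLin := by
      rw [he, LinearMap.range_comp, LinearEquiv.range, Submodule.map_top]
    rw [hr]
    apply Submodule.eq_top_of_finrank_eq
    rw [← Matrix.rank, hrank, Module.finrank_fin_fun]
  -- dimension of G
  have hdim : Module.finrank ℝ G + p = n + n := by
    have h1 := LinearMap.finrank_range_add_finrank_ker L
    rw [hsurj] at h1
    have h2 : Module.finrank ℝ ((Fin n → ℝ) × (Fin n → ℝ)) = n + n := by
      rw [Module.finrank_prod]; simp
    rw [finrank_top, Module.finrank_fin_fun, h2] at h1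
    have h3 : Module.finrank ℝ G = Module.finrank ℝ (LinearMap.ker L) := by rw [hGk]
    omega
  -- positivity on G
  have hpos : ∀ q ∈ G, (0:ℝ) ≤ q.1 ⬝ᵥ q.2 := by
    intro q hq
    have := hmono q hq 0 G.zero_mem
    simpa using this
  have hdotnn : ∀ v : Fin n → ℝ, (0:ℝ) ≤ v ⬝ᵥ v := fun v =>
    Finset.sum_nonneg fun i _ => mul_self_nonneg _
  -- sum map restricted to G is injective
  set φ : ((Fin n → ℝ) × (Fin n → ℝ)) →ₗ[ℝ] (Fin n → ℝ) :=
    LinearMap.fst ℝ _ _ + LinearMap.snd ℝ _ _ with hφ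
  have hφapp : ∀ q : (Fin n → ℝ) × (Fin n → ℝ), φ q = q.1 + q.2 := fun q => rfl
  set φG : G →ₗ[ℝ] (Fin n → ℝ) := φ ∘ₗ G.subtype with hφG
  have hzero : ∀ q ∈ G, q.1 + q.2 = 0 → q = 0 := by
    intro q hq h0
    have h2 : q.2 = -q.1 := by
      have := congrArg (fun v => v - q.1) h0
      simpa [add_sub_cancel_left] using this
    have hp := hpos q hq
    rw [h2, dotProduct_neg] at hp
    have : q.1 ⬝ᵥ q.1 = 0 := le_antisymm (by linarith) (hdotnn q.1)
    have h1 : q.1 = 0 := dotProduct_self_eq_zero.mp this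
    have : q.2 = 0 := by rw [h2, h1]; simp
    exact Prod.ext h1 this
  have hinj : Function.Injective φG := by
    rw [← LinearMap.ker_eq_bot]
    apply (Submodule.eq_bot_iff _).mpr
    rintro ⟨q, hq⟩ hk
    have : q = 0 := hzero q hq (by simpa [hφG, hφapp] using hk)
    simpa using this
  have hle : Module.finrank ℝ G ≤ n := by
    have := LinearMap.finrank_le_finrank_of_injective hinj
    rwa [Module.finrank_fin_fun] at this
  have hnp : n ≤ p := by omega
  refine ⟨hnp, ?_, ?_⟩
  · -- maximal → dims
    intro hmax
    by_contra hc
    have hlt : Module.finrank ℝ G < n := by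
      rcases Nat.lt_or_ge (Module.finrank ℝ G) n with h | h
      · exact h
      · exact absurd ⟨by omega, by omega⟩ hc
    -- the range of φG is a proper subspace
    set M : Submodule ℝ (Fin n → ℝ) := LinearMap.range φG with hM
    have hMfr : Module.finrank ℝ M < n := by
      rw [hM, LinearMap.finrank_range_of_inj hinj]; exact hlt
    -- move to Euclidean space to get an orthogonal vector
    set e : EuclideanSpace ℝ (Fin n) ≃ₗ[ℝ] (Fin n → ℝ) :=
      WithLp.linearEquiv 2 ℝ (Fin n → ℝ) with he
    set M' : Submodule ℝ (EuclideanSpace ℝ (Fin n)) := M.comap e.toLinearMap with hM'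
    have hM'fr : Module.finrank ℝ M' < n := by
      have : Module.finrank ℝ M' = Module.finrank ℝ M := by
        rw [hM', Submodule.comap_equiv_eq_map_symm]
        exact LinearEquiv.finrank_map_eq _ _
      omega
    have hM'top : M' ≠ ⊤ := by
      intro h
      rw [h, finrank_top] at hM'fr
      have : Module.finrank ℝ (EuclideanSpace ℝ (Fin n)) = n := by
        simp [finrank_euclideanSpace]
      omega
    have hbot : M'ᗮ ≠ ⊥ := fun h => hM'top (Submodule.orthogonal_eq_bot_iff.mp h)
    obtain ⟨v, hv, hv0⟩ := Submodule.exists_mem_ne_zero_of_ne_bot hbot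
    set v₀ : Fin n → ℝ := e v with hv₀
    have hv₀0 : v₀ ≠ 0 := fun h => hv0 (by
      apply e.injective; rw [← hv₀, h]; simp)
    have horth : ∀ w ∈ M, w ⬝ᵥ v₀ = 0 := by
      intro w hw
      have hw' : (e.symm w) ∈ M' := by
        rw [hM', Submodule.mem_comap]; simpa using hw
      have := (Submodule.mem_orthogonal _ _).mp hv (e.symm w) hw'
      simpa [PiLp.inner_apply, RCLike.inner_apply, dotProduct, he, hv₀, mul_comm] using this
    have hrel : ∀ b ∈ (G : Set ((Fin n → ℝ) × (Fin n → ℝ))),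
        (0:ℝ) ≤ (v₀ - b.1) ⬝ᵥ (v₀ - b.2) := by
      intro b hb
      have hsum : (b.1 + b.2) ⬝ᵥ v₀ = 0 := horth _ ⟨⟨b, hb⟩, rfl⟩
      rw [add_dotProduct] at hsum
      have hcomm : v₀ ⬝ᵥ b.2 = b.2 ⬝ᵥ v₀ := dotProduct_comm _ _
      have hexp : (v₀ - b.1) ⬝ᵥ (v₀ - b.2)
          = v₀ ⬝ᵥ v₀ - v₀ ⬝ᵥ b.2 - b.1 ⬝ᵥ v₀ + b.1 ⬝ᵥ b.2 := by
        rw [sub_dotProduct, dotProduct_sub, dotProduct_sub]; ring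
      have := hpos b hb
      have := hdotnn v₀
      rw [hexp]; linarith
    have hmem : ((v₀, v₀) : (Fin n → ℝ) × (Fin n → ℝ)) ∈ G := hmax.2 _ hrel
    have : (v₀ + v₀) ⬝ᵥ v₀ = 0 := horth _ ⟨⟨_, hmem⟩, rfl⟩
    rw [add_dotProduct] at this
    have hz : v₀ ⬝ᵥ v₀ = 0 := by linarith
    exact hv₀0 (dotProduct_self_eq_zero.mp hz)
  · -- dims → maximal
    rintro ⟨hfr, -⟩
    refine ⟨hmono, ?_⟩
    intro a ha
    have hrange : LinearMap.range φG = ⊤ := by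
      apply Submodule.eq_top_of_finrank_eq
      rw [LinearMap.finrank_range_of_inj hinj, hfr, Module.finrank_fin_fun]
    obtain ⟨⟨q, hq⟩, hφq⟩ : ∃ g : G, φG g = a.1 + a.2 := by
      have : a.1 + a.2 ∈ LinearMap.range φG := by rw [hrange]; trivial
      exact this
    have hsum : q.1 + q.2 = a.1 + a.2 := by simpa [hφG, hφapp] using hφq
    have hmono' := ha q hq
    have hneg : a.2 - q.2 = -(a.1 - q.1) := by
      have := congrArg (fun v => v - q.2 - a.1) hsum
      funext i
      have := congrFun this i
      simp only [Pi.sub_apply, Pi.add_apply, Pi.neg_apply] at this ⊢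
      linarith
    rw [hneg, dotProduct_neg] at hmono'
    have hz : (a.1 - q.1) ⬝ᵥ (a.1 - q.1) = 0 :=
      le_antisymm (by linarith) (hdotnn _)
    have h1 : a.1 = q.1 := by
      have := dotProduct_self_eq_zero.mp hz
      have := sub_eq_zero.mp this
      exact this
    have h2 : a.2 = q.2 := by
      have : q.2 = a.2 := by
        have := hsum
        rw [← h1] at this
        exact add_left_cancel this
      exact this.symm
    have : a = q := Prod.ext h1 h2
    rw [this]; exact hq
end

section
/- Let n, p ∈ ℕ, let A, B ∈ ℝ^{p×n}, and let M ∈ ℝ^{p×p}. Define linear relations G̃ and Ĝ by gra G̃ = {(x,x*) ∈ ℝⁿ × ℝⁿ : Mᵀ(Ax + Bx*) = 0} and gra Ĝ = {(Bᵀu, −Aᵀu) : u ∈ ran M}. Then the adjoint of G̃ equals Ĝ, i.e., gra (G̃)* = gra Ĝ. -/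
open Matrix Pointwise

lemma dot_ext {n : ℕ} {v w : Fin n → ℝ} (h : ∀ x, v ⬝ᵥ x = w ⬝ᵥ x) : v = w := by
  funext j
  have := h (Pi.single j 1)
  simpa [dotProduct_single] using this

/-- for any `M ∈ ℝ^{p×p}`, the adjoint of
`G̃ = {(x,x*) : Mᵀ(Ax + Bx*) = 0}` is `Ĝ = {(Bᵀu, −Aᵀu) : u ∈ ran M}`. -/
theorem stmt8 {n p : ℕ} (A B : Matrix (Fin p) (Fin n) ℝ)
    (M : Matrix (Fin p) (Fin p) ℝ) :
    adjGraph {q : (Fin n → ℝ) × (Fin n → ℝ) | Mᵀ *ᵥ (A *ᵥ q.1 + B *ᵥ q.2) = 0} =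
      {q : (Fin n → ℝ) × (Fin n → ℝ) |
        ∃ u ∈ Set.range (fun v : Fin p → ℝ => M *ᵥ v), q = (Bᵀ *ᵥ u, -(Aᵀ *ᵥ u))} := by
  ext q
  constructor
  · intro hq
    simp only [adjGraph, Set.mem_setOf_eq] at hq
    set N : ((Fin n → ℝ) × (Fin n → ℝ)) →ₗ[ℝ] (Fin p → ℝ) :=
      (Matrix.mulVecLin Mᵀ).comp ((Matrix.mulVecLin A).coprod (Matrix.mulVecLin B)) with hN
    set K : ((Fin n → ℝ) × (Fin n → ℝ)) →ₗ[ℝ] ℝ :=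
      { toFun := fun s => q.2 ⬝ᵥ s.1 - q.1 ⬝ᵥ s.2
        map_add' := by
          intro a b
          simp only [Prod.fst_add, Prod.snd_add, dotProduct_add]
          ring
        map_smul' := by
          intro c a
          simp only [Prod.smul_fst, Prod.smul_snd, dotProduct_smul, smul_eq_mul,
            RingHom.id_apply]
          ring } with hK
    have hker : ⨅ i, LinearMap.ker ((LinearMap.proj i).comp N) ≤ LinearMap.ker K := by
      intro s hs
      simp only [Submodule.mem_iInf, LinearMap.mem_ker, LinearMap.comp_apply,
        LinearMap.proj_apply] at hs
      have hNs : N s = 0 := funext hs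
      have : Mᵀ *ᵥ (A *ᵥ s.1 + B *ᵥ s.2) = 0 := by
        simpa only [hN, LinearMap.comp_apply, LinearMap.coprod_apply,
          Matrix.mulVecLin_apply] using hNs
      simpa [hK] using hq s this
    have hspan := mem_span_of_iInf_ker_le_ker (L := fun i => (LinearMap.proj i).comp N) hker
    obtain ⟨c, hc⟩ := (Submodule.mem_span_range_iff_exists_fun ℝ).1 hspan
    have key : ∀ s : (Fin n → ℝ) × (Fin n → ℝ),
        q.2 ⬝ᵥ s.1 - q.1 ⬝ᵥ s.2 = c ⬝ᵥ (Mᵀ *ᵥ (A *ᵥ s.1 + B *ᵥ s.2)) := by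
      intro s
      have h := LinearMap.congr_fun hc s
      simp only [LinearMap.coe_sum, Finset.sum_apply, LinearMap.smul_apply,
        LinearMap.comp_apply, LinearMap.proj_apply, smul_eq_mul, hN, hK,
        LinearMap.coprod_apply, Matrix.mulVecLin_apply, LinearMap.coe_mk,
        AddHom.coe_mk] at h
      rw [← h]
      simp [dotProduct]
    have h1 : q.2 = Aᵀ *ᵥ (M *ᵥ c) := by
      apply dot_ext
      intro x
      have hk := key (x, 0)
      simp only [Matrix.mulVec_zero, add_zero, dotProduct_zero, sub_zero] at hk
      rw [hk, Matrix.dotProduct_mulVec, Matrix.vecMul_transpose, Matrix.dotProduct_mulVec,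
        Matrix.mulVec_transpose]
    have h2 : q.1 = -(Bᵀ *ᵥ (M *ᵥ c)) := by
      apply dot_ext
      intro x
      have hk := key (0, x)
      simp only [Matrix.mulVec_zero, zero_add, dotProduct_zero, zero_sub] at hk
      have hr : (-(Bᵀ *ᵥ (M *ᵥ c))) ⬝ᵥ x = -(c ⬝ᵥ (Mᵀ *ᵥ (B *ᵥ x))) := by
        rw [neg_dotProduct, Matrix.mulVec_transpose, ← Matrix.dotProduct_mulVec,
          ← Matrix.vecMul_transpose, ← Matrix.dotProduct_mulVec]
      rw [hr, ← hk, neg_neg]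
    refine ⟨-(M *ᵥ c), ⟨-c, by simp [Matrix.mulVec_neg]⟩, ?_⟩
    have hqq : q = (q.1, q.2) := rfl
    rw [hqq, h1, h2]
    simp [Matrix.mulVec_neg]
  · rintro ⟨u, ⟨v, rfl⟩, rfl⟩
    intro s hs
    simp only [Set.mem_setOf_eq] at hs
    have eA : (Aᵀ *ᵥ (M *ᵥ v)) ⬝ᵥ s.1 = (M *ᵥ v) ⬝ᵥ (A *ᵥ s.1) := by
      rw [Matrix.mulVec_transpose, ← Matrix.dotProduct_mulVec]
    have eB : (Bᵀ *ᵥ (M *ᵥ v)) ⬝ᵥ s.2 = (M *ᵥ v) ⬝ᵥ (B *ᵥ s.2) := by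
      rw [Matrix.mulVec_transpose, ← Matrix.dotProduct_mulVec]
    have eM : (M *ᵥ v) ⬝ᵥ (A *ᵥ s.1 + B *ᵥ s.2) = 0 := by
      rw [dotProduct_comm, Matrix.dotProduct_mulVec, ← Matrix.mulVec_transpose, hs]
      simp
    rw [dotProduct_add] at eM
    simp only [neg_dotProduct, eA, eB]
    linarith
end

section
/- Let n, p ∈ ℕ, let A, B ∈ ℝ^{p×n}, assume the p×2n matrix (A B) has rank p, and let G be the linear relation with graph gra G = {(x,x*) ∈ ℝⁿ × ℝⁿ : Ax + Bx* = 0}. Let λ₁,…,λ_k > 0 ≥ λ_{k+1},…,λ_p be the eigenvalues of the symmetric p×p matrix ABᵀ + BAᵀ counted with multiplicity, let v₁,…,v_p be a corresponding orthonormal basis of ℝᵖ of eigenvectors, and let V_g be the (p−k)×p matrix whose rows are v_{k+1}ᵀ,…,v_pᵀ. Define G̃ by gra G̃ = {(x,x*) : V_g(Ax + Bx*) = 0}. Then gra G̃ = gra G + {(Bᵀu, Aᵀu) : u ∈ span{v₁,…,v_k}}. -/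
open Matrix Pointwise

/-- with eigenvalues of `ABᵀ + BAᵀ` ordered so that `λ₁,…,λ_k > 0 ≥ λ_{k+1},…,λ_p`,
an orthonormal eigenbasis `v`, and `V_g` the matrix with rows `v_{k+1}ᵀ,…,v_pᵀ`:
`{(x,x*) : V_g(Ax + Bx*) = 0} = gra G + {(Bᵀu, Aᵀu) : u ∈ span{v₁,…,v_k}}`. -/
theorem stmt9 {n p k : ℕ} (A B : Matrix (Fin p) (Fin n) ℝ)
    (hrank : (Matrix.fromCols A B).rank = p)
    (hk : k ≤ p) (lam : Fin p → ℝ) (v : Fin p → (Fin p → ℝ))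
    (hpos : ∀ i : Fin p, (i : ℕ) < k → 0 < lam i)
    (hnonpos : ∀ i : Fin p, k ≤ (i : ℕ) → lam i ≤ 0)
    (heig : ∀ i : Fin p, (A * Bᵀ + B * Aᵀ) *ᵥ v i = lam i • v i)
    (hnorm : ∀ i : Fin p, v i ⬝ᵥ v i = 1)
    (horth : ∀ i j : Fin p, i ≠ j → v i ⬝ᵥ v j = 0)
    (Vg : Matrix (Fin (p - k)) (Fin p) ℝ)
    (hVg : ∀ i : Fin (p - k), Vg i = v ⟨k + (i : ℕ), by have := i.2; omega⟩) :
    {q : (Fin n → ℝ) × (Fin n → ℝ) | Vg *ᵥ (A *ᵥ q.1 + B *ᵥ q.2) = 0} =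
      {q : (Fin n → ℝ) × (Fin n → ℝ) | A *ᵥ q.1 + B *ᵥ q.2 = 0} +
        ((fun u => (Bᵀ *ᵥ u, Aᵀ *ᵥ u)) ''
          ↑(Submodule.span ℝ {w : Fin p → ℝ | ∃ i : Fin p, (i : ℕ) < k ∧ w = v i})) := by
  classical
  set M : Matrix (Fin p) (Fin p) ℝ := A * Bᵀ + B * Aᵀ with hMdef
  set V : Matrix (Fin p) (Fin p) ℝ := Matrix.of v with hVdef
  -- Vg kills v i for i < k
  have hVgv : ∀ i : Fin p, (i : ℕ) < k → Vg *ᵥ v i = 0 := by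
    intro i hi
    funext j
    have hne : (⟨k + (j : ℕ), by have := j.2; omega⟩ : Fin p) ≠ i := by
      intro h
      have := congrArg Fin.val h
      simp at this; omega
    have := horth _ i hne
    simp [Matrix.mulVec, hVg j, this]
  -- span is killed by Vg ∘ M
  have hker : ∀ u ∈ Submodule.span ℝ {w : Fin p → ℝ | ∃ i : Fin p, (i : ℕ) < k ∧ w = v i},
      Vg *ᵥ (M *ᵥ u) = 0 := by
    intro u hu
    have hle : Submodule.span ℝ {w : Fin p → ℝ | ∃ i : Fin p, (i : ℕ) < k ∧ w = v i}
        ≤ LinearMap.ker (Matrix.mulVecLin (Vg * M)) := by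
      rw [Submodule.span_le]
      rintro w ⟨i, hi, rfl⟩
      simp only [SetLike.mem_coe, LinearMap.mem_ker, Matrix.mulVecLin_apply]
      rw [← Matrix.mulVec_mulVec, heig i, Matrix.mulVec_smul, hVgv i hi, smul_zero]
    have := hle hu
    simpa [Matrix.mulVec_mulVec] using this
  -- orthogonality: V * Vᵀ = 1
  have hVVt : V * Vᵀ = 1 := by
    ext i j
    by_cases h : i = j
    · subst h
      simpa [Matrix.mul_apply, dotProduct, V] using hnorm i
    · have := horth i j h
      simp [Matrix.mul_apply, dotProduct, V, Matrix.one_apply, h]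
      simpa [dotProduct] using this
  have hVtV : Vᵀ * V = 1 := mul_eq_one_comm.mp hVVt
  -- M * Vᵀ = Vᵀ * diagonal lam
  have hMVt : M * Vᵀ = Vᵀ * Matrix.diagonal lam := by
    ext j i
    have h := congrFun (heig i) j
    rw [Matrix.mul_diagonal]
    simp only [Matrix.mulVec, dotProduct, Pi.smul_apply, smul_eq_mul] at h
    simp only [Matrix.mul_apply, Matrix.transpose_apply, V, Matrix.of_apply]
    rw [h, mul_comm]
  -- Vᵀ *ᵥ w as a sum
  have hVt_sum : ∀ w : Fin p → ℝ, Vᵀ *ᵥ w = ∑ i : Fin p, w i • v i := by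
    intro w
    funext j
    simp [Matrix.mulVec, dotProduct, V, Finset.sum_apply, mul_comm]
  ext q
  simp only [Set.mem_setOf_eq, Set.mem_add, Set.mem_image, SetLike.mem_coe]
  constructor
  · intro hq
    set y : Fin p → ℝ := A *ᵥ q.1 + B *ᵥ q.2 with hy
    set c : Fin p → ℝ := V *ᵥ y with hc
    have hc0 : ∀ i : Fin p, k ≤ (i : ℕ) → c i = 0 := by
      intro i hi
      have hlt : (i : ℕ) - k < p - k := by have := i.2; omega
      have := congrFun hq ⟨(i : ℕ) - k, hlt⟩
      have hidx : (⟨k + ((i : ℕ) - k), by omega⟩ : Fin p) = i := by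
        apply Fin.ext; simp; omega
      simpa [Matrix.mulVec, hVg, hidx, hc, V, dotProduct] using this
    set d : Fin p → ℝ := fun i => if (i : ℕ) < k then c i / lam i else 0 with hd
    set u : Fin p → ℝ := Vᵀ *ᵥ d with hu
    have hdiag : Matrix.diagonal lam *ᵥ d = c := by
      funext i
      simp only [Matrix.mulVec_diagonal]
      by_cases hik : (i : ℕ) < k
      · have := (hpos i hik).ne'
        simp only [hd, hik, ↓reduceIte]
        field_simp
      · simp [hd, hik, hc0 i (by omega)]
    have hMu : M *ᵥ u = y := by
      rw [hu, Matrix.mulVec_mulVec, hMVt, ← Matrix.mulVec_mulVec, hdiag, hc,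
        Matrix.mulVec_mulVec, hVtV, Matrix.one_mulVec]
    have humem : u ∈ Submodule.span ℝ {w : Fin p → ℝ | ∃ i : Fin p, (i : ℕ) < k ∧ w = v i} := by
      rw [hu, hVt_sum]
      apply Submodule.sum_mem
      intro i _
      by_cases hik : (i : ℕ) < k
      · exact Submodule.smul_mem _ _ (Submodule.subset_span ⟨i, hik, rfl⟩)
      · simp [hd, hik]
    refine ⟨(q.1 - Bᵀ *ᵥ u, q.2 - Aᵀ *ᵥ u), ?_, (Bᵀ *ᵥ u, Aᵀ *ᵥ u), ⟨u, humem, rfl⟩, by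
      ext <;> simp⟩
    show A *ᵥ (q.1 - Bᵀ *ᵥ u) + B *ᵥ (q.2 - Aᵀ *ᵥ u) = 0
    have : M *ᵥ u = A *ᵥ (Bᵀ *ᵥ u) + B *ᵥ (Aᵀ *ᵥ u) := by
      simp [hMdef, Matrix.add_mulVec, Matrix.mulVec_mulVec]
    rw [Matrix.mulVec_sub, Matrix.mulVec_sub]
    have := hMu
    rw [‹M *ᵥ u = A *ᵥ (Bᵀ *ᵥ u) + B *ᵥ (Aᵀ *ᵥ u)›] at this
    rw [hy] at this
    abel_nf
    abel_nf at this
    linear_combination (norm := abel1) -this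
  · rintro ⟨a, ha, b, ⟨u, hu, rfl⟩, hab⟩
    have h1 : A *ᵥ q.1 + B *ᵥ q.2 = M *ᵥ u := by
      have : q.1 = a.1 + Bᵀ *ᵥ u ∧ q.2 = a.2 + Aᵀ *ᵥ u := by
        constructor
        · exact (congrArg Prod.fst hab).symm
        · exact (congrArg Prod.snd hab).symm
      rw [this.1, this.2, Matrix.mulVec_add, Matrix.mulVec_add]
      rw [show A *ᵥ a.1 + A *ᵥ (Bᵀ *ᵥ u) + (B *ᵥ a.2 + B *ᵥ (Aᵀ *ᵥ u))
          = (A *ᵥ a.1 + B *ᵥ a.2) + (A *ᵥ (Bᵀ *ᵥ u) + B *ᵥ (Aᵀ *ᵥ u)) by abel, ha]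
      simp [hMdef, Matrix.add_mulVec, Matrix.mulVec_mulVec]
    rw [h1]
    exact hker u hu
end

section
/- Let n, p ∈ ℕ, let A, B ∈ ℝ^{p×n}, assume the p×2n matrix (A B) has rank p, and let G be the linear relation with graph gra G = {(x,x*) ∈ ℝⁿ × ℝⁿ : Ax + Bx* = 0}. Then G is monotone if and only if the symmetric p×p matrix ABᵀ + BAᵀ has exactly p − n positive eigenvalues counted with multiplicity (equivalently, dim V₊(BAᵀ) = p − n). -/
open Matrix Pointwise

namespace Stmt10Aux

variable {p : ℕ}

lemma inner_eq_dot (u v : EuclideanSpace ℝ (Fin p)) :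
    (inner ℝ u v : ℝ) = u ⬝ᵥ v := by
  simp [PiLp.inner_apply, RCLike.inner_apply, dotProduct, mul_comm]

noncomputable def Tmat (C : Matrix (Fin p) (Fin p) ℝ) :
    Module.End ℝ (EuclideanSpace ℝ (Fin p)) :=
  (WithLp.linearEquiv 2 ℝ (Fin p → ℝ)).symm.toLinearMap ∘ₗ Matrix.mulVecLin C ∘ₗ
    (WithLp.linearEquiv 2 ℝ (Fin p → ℝ)).toLinearMap

noncomputable def eL : EuclideanSpace ℝ (Fin p) ≃ₗ[ℝ] (Fin p → ℝ) :=
  WithLp.linearEquiv 2 ℝ (Fin p → ℝ)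

lemma eigenspace_eq_map (C : Matrix (Fin p) (Fin p) ℝ) (μ : ℝ) :
    Module.End.eigenspace (Matrix.mulVecLin C) μ
      = Submodule.map (eL (p := p)).toLinearMap
          (Module.End.eigenspace (Tmat C) μ) := by
  ext v
  rw [Submodule.mem_map_equiv, Module.End.mem_eigenspace_iff, Module.End.mem_eigenspace_iff]
  constructor
  · intro h
    show WithLp.toLp 2 (C *ᵥ v) = μ • WithLp.toLp 2 v
    rw [show C *ᵥ v = μ • v from h]
    rfl
  · intro h
    exact congrArg WithLp.ofLp h

lemma mulVecLin_isSymmetric (C : Matrix (Fin p) (Fin p) ℝ) (hC : Cᵀ = C) :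
    (Tmat C).IsSymmetric := by
  intro x y
  rw [inner_eq_dot, inner_eq_dot]
  show (C *ᵥ x) ⬝ᵥ y = x ⬝ᵥ (C *ᵥ y)
  rw [Matrix.dotProduct_mulVec, ← Matrix.mulVec_transpose, hC]

noncomputable def eBasis (C : Matrix (Fin p) (Fin p) ℝ) (hC : Cᵀ = C) :
    OrthonormalBasis (Fin p) ℝ (EuclideanSpace ℝ (Fin p)) :=
  (mulVecLin_isSymmetric C hC).eigenvectorBasis finrank_euclideanSpace_fin

noncomputable def eVal (C : Matrix (Fin p) (Fin p) ℝ) (hC : Cᵀ = C) : Fin p → ℝ :=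
  (mulVecLin_isSymmetric C hC).eigenvalues finrank_euclideanSpace_fin

lemma sup_eigenspace_eq_span (C : Matrix (Fin p) (Fin p) ℝ) (hC : Cᵀ = C) (s : Set ℝ) :
    (⨆ μ : s, Module.End.eigenspace
        (Tmat C) (μ : ℝ)) =
      Submodule.span ℝ (eBasis C hC '' {i | eVal C hC i ∈ s}) := by
  apply le_antisymm
  · refine iSup_le fun μ u hu => ?_
    have hrep := (eBasis C hC).sum_repr u
    rw [← hrep]
    refine Submodule.sum_mem _ fun i _ => ?_
    by_cases h : eVal C hC i ∈ s
    · exact Submodule.smul_mem _ _ (Submodule.subset_span ⟨i, h, rfl⟩)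
    · have hne : eVal C hC i ≠ (μ : ℝ) := fun he => h (he ▸ μ.2)
      have h1 := (mulVecLin_isSymmetric C hC).eigenvectorBasis_apply_self_apply
        finrank_euclideanSpace_fin u i
      have h2 : (Tmat C) u
          = (μ : ℝ) • u := Module.End.mem_eigenspace_iff.mp hu
      rw [h2, _root_.map_smul] at h1
      have h3 : ((μ : ℝ) - eVal C hC i) * (eBasis C hC).repr u i = 0 := by
        have : (μ : ℝ) * (eBasis C hC).repr u i
            = eVal C hC i * (eBasis C hC).repr u i := h1
        ring_nf
        linarith [this]
      rcases mul_eq_zero.mp h3 with h4 | h4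
      · exact absurd (sub_eq_zero.mp h4).symm hne
      · rw [show (eBasis C hC).repr u i = 0 from h4, zero_smul]
        exact Submodule.zero_mem _
  · rw [Submodule.span_le]
    rintro _ ⟨i, hi, rfl⟩
    exact Submodule.mem_iSup_of_mem ⟨eVal C hC i, hi⟩
      ((mulVecLin_isSymmetric C hC).hasEigenvector_eigenvectorBasis
        finrank_euclideanSpace_fin i).1

lemma repr_eq_zero_of_mem_span (C : Matrix (Fin p) (Fin p) ℝ) (hC : Cᵀ = C)
    (P : Fin p → Prop) {u : EuclideanSpace ℝ (Fin p)}
    (hu : u ∈ Submodule.span ℝ (eBasis C hC '' {i | P i}))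
    {j : Fin p} (hj : ¬ P j) : (eBasis C hC).repr u j = 0 := by
  classical
  induction hu using Submodule.span_induction with
  | mem x hx =>
    obtain ⟨i, hi, rfl⟩ := hx
    have hij : j ≠ i := fun h => hj (h ▸ hi)
    rw [(eBasis C hC).repr_self i, EuclideanSpace.single_apply, if_neg hij]
  | zero => simp
  | add x y _ _ hx hy => rw [map_add]; simp [hx, hy]
  | smul c x _ hx => rw [_root_.map_smul]; simp [hx]

lemma dot_mulVec_eq_sum (C : Matrix (Fin p) (Fin p) ℝ) (hC : Cᵀ = C)
    (u : EuclideanSpace ℝ (Fin p)) :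
    u ⬝ᵥ (C *ᵥ u) = ∑ i, eVal C hC i * ((eBasis C hC).repr u i)^2 := by
  have h1 : u ⬝ᵥ (C *ᵥ u)
      = (inner ℝ u ((Tmat C) u) : ℝ) := by
    rw [inner_eq_dot]; rfl
  rw [h1, ← (eBasis C hC).repr.inner_map_map u
    ((Tmat C) u), inner_eq_dot]
  have h2 : ∀ i, (eBasis C hC).repr
      ((Tmat C) u) i
      = eVal C hC i * (eBasis C hC).repr u i :=
    (mulVecLin_isSymmetric C hC).eigenvectorBasis_apply_self_apply finrank_euclideanSpace_fin u
  unfold dotProduct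
  refine Finset.sum_congr rfl fun i _ => ?_
  rw [h2 i]; ring

lemma finrank_span_image (C : Matrix (Fin p) (Fin p) ℝ) (hC : Cᵀ = C)
    (P : Fin p → Prop) [DecidablePred P] :
    Module.finrank ℝ (Submodule.span ℝ (eBasis C hC '' {i | P i})) = Fintype.card {i // P i} := by
  have himg : eBasis C hC '' {i | P i} = Set.range fun i : {i // P i} => eBasis C hC i := by
    ext x; constructor
    · rintro ⟨i, hi, rfl⟩; exact ⟨⟨i, hi⟩, rfl⟩
    · rintro ⟨⟨i, hi⟩, rfl⟩; exact ⟨i, hi, rfl⟩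
  rw [himg]
  exact finrank_span_eq_card
    (((eBasis C hC).orthonormal.comp _ Subtype.val_injective).linearIndependent)


lemma pos_def_on (C : Matrix (Fin p) (Fin p) ℝ) (hC : Cᵀ = C)
    {u : EuclideanSpace ℝ (Fin p)}
    (hu : u ∈ Submodule.span ℝ (eBasis C hC '' {i | 0 < eVal C hC i})) (hne : u ≠ 0) :
    0 < u ⬝ᵥ (C *ᵥ u) := by
  classical
  rw [dot_mulVec_eq_sum C hC u]
  have hz : ∀ j, ¬ (0 < eVal C hC j) → (eBasis C hC).repr u j = 0 := fun j hj =>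
    repr_eq_zero_of_mem_span C hC _ hu hj
  have hrne : (eBasis C hC).repr u ≠ 0 := fun h0 => hne (by
    have := congrArg (eBasis C hC).repr.symm h0
    simpa using this)
  have hj : ∃ j, (eBasis C hC).repr u j ≠ 0 := by
    by_contra hco
    push_neg at hco
    exact hrne (PiLp.ext hco)
  obtain ⟨j, hjne⟩ := hj
  have hjpos : 0 < eVal C hC j := by
    by_contra hjp
    exact hjne (hz j hjp)
  refine Finset.sum_pos' (fun i _ => ?_) ⟨j, Finset.mem_univ j, ?_⟩
  · by_cases h : 0 < eVal C hC i
    · positivity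
    · rw [hz i h]; ring_nf; exact le_refl 0
  · have : 0 < ((eBasis C hC).repr u j)^2 := by positivity
    positivity

lemma neg_semidef_on (C : Matrix (Fin p) (Fin p) ℝ) (hC : Cᵀ = C)
    {u : EuclideanSpace ℝ (Fin p)}
    (hu : u ∈ Submodule.span ℝ (eBasis C hC '' {i | eVal C hC i ≤ 0})) :
    u ⬝ᵥ (C *ᵥ u) ≤ 0 := by
  classical
  rw [dot_mulVec_eq_sum C hC u]
  refine Finset.sum_nonpos fun i _ => ?_
  by_cases h : eVal C hC i ≤ 0
  · exact mul_nonpos_of_nonpos_of_nonneg h (sq_nonneg _)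
  · rw [repr_eq_zero_of_mem_span C hC _ hu h]; ring_nf; exact le_refl 0

lemma finranks_add (C : Matrix (Fin p) (Fin p) ℝ) (hC : Cᵀ = C) :
    Module.finrank ℝ (Submodule.span ℝ (eBasis C hC '' {i | 0 < eVal C hC i}))
      + Module.finrank ℝ (Submodule.span ℝ (eBasis C hC '' {i | eVal C hC i ≤ 0})) = p := by
  classical
  rw [finrank_span_image C hC (fun i => 0 < eVal C hC i),
    finrank_span_image C hC (fun i => eVal C hC i ≤ 0)]
  have h1 : Fintype.card {i // eVal C hC i ≤ 0}
      = Fintype.card {i // ¬ 0 < eVal C hC i} :=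
    Fintype.card_congr (Equiv.subtypeEquivRight fun i => not_lt.symm)
  have h2 := Fintype.card_congr (Equiv.sumCompl (fun i => 0 < eVal C hC i))
  rw [Fintype.card_sum, Fintype.card_fin] at h2
  omega

lemma finrank_le_of_nonneg {n : ℕ} (W : Submodule ℝ ((Fin n → ℝ) × (Fin n → ℝ)))
    (h : ∀ w ∈ W, 0 ≤ w.1 ⬝ᵥ w.2) : Module.finrank ℝ W ≤ n := by
  have hinj : Function.Injective
      (((LinearMap.fst ℝ (Fin n → ℝ) (Fin n → ℝ))
        + (LinearMap.snd ℝ (Fin n → ℝ) (Fin n → ℝ))).comp W.subtype) := by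
    rw [← LinearMap.ker_eq_bot]
    refine (Submodule.eq_bot_iff _).mpr fun w hw => ?_
    have h1 : (w : (Fin n → ℝ) × (Fin n → ℝ)).1 + (w : (Fin n → ℝ) × (Fin n → ℝ)).2 = 0 := by
      simpa using hw
    have h2 : (w : (Fin n → ℝ) × (Fin n → ℝ)).2 = -(w : (Fin n → ℝ) × (Fin n → ℝ)).1 :=
      eq_neg_of_add_eq_zero_left (by linear_combination h1)
    have h3 := h w w.2
    rw [h2, dotProduct_neg] at h3
    have h4 : (w : (Fin n → ℝ) × (Fin n → ℝ)).1 ⬝ᵥ (w : (Fin n → ℝ) × (Fin n → ℝ)).1 = 0 :=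
      le_antisymm (by linarith) (Finset.sum_nonneg fun i _ => mul_self_nonneg _)
    have h5 : (w : (Fin n → ℝ) × (Fin n → ℝ)).1 = 0 := dotProduct_self_eq_zero.mp h4
    have h6 : (w : (Fin n → ℝ) × (Fin n → ℝ)).2 = 0 := by rw [h2, h5]; simp
    exact Subtype.ext (Prod.ext h5 h6)
  calc Module.finrank ℝ W ≤ Module.finrank ℝ (Fin n → ℝ) :=
        LinearMap.finrank_le_finrank_of_injective hinj
    _ = n := by rw [Module.finrank_fintype_fun_eq_card, Fintype.card_fin]

lemma finrank_le_of_nonpos {n : ℕ} (W : Submodule ℝ ((Fin n → ℝ) × (Fin n → ℝ)))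
    (h : ∀ w ∈ W, w.1 ⬝ᵥ w.2 ≤ 0) : Module.finrank ℝ W ≤ n := by
  have hinj : Function.Injective
      (((LinearMap.fst ℝ (Fin n → ℝ) (Fin n → ℝ))
        - (LinearMap.snd ℝ (Fin n → ℝ) (Fin n → ℝ))).comp W.subtype) := by
    rw [← LinearMap.ker_eq_bot]
    refine (Submodule.eq_bot_iff _).mpr fun w hw => ?_
    have h1 : (w : (Fin n → ℝ) × (Fin n → ℝ)).1 - (w : (Fin n → ℝ) × (Fin n → ℝ)).2 = 0 := by
      simpa using hw
    have h2 : (w : (Fin n → ℝ) × (Fin n → ℝ)).2 = (w : (Fin n → ℝ) × (Fin n → ℝ)).1 :=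
      (sub_eq_zero.mp h1).symm
    have h3 := h w w.2
    rw [h2] at h3
    have h4 : (w : (Fin n → ℝ) × (Fin n → ℝ)).1 ⬝ᵥ (w : (Fin n → ℝ) × (Fin n → ℝ)).1 = 0 :=
      le_antisymm h3 (Finset.sum_nonneg fun i _ => mul_self_nonneg _)
    have h5 : (w : (Fin n → ℝ) × (Fin n → ℝ)).1 = 0 := dotProduct_self_eq_zero.mp h4
    have h6 : (w : (Fin n → ℝ) × (Fin n → ℝ)).2 = 0 := by rw [h2, h5]
    exact Subtype.ext (Prod.ext h5 h6)
  calc Module.finrank ℝ W ≤ Module.finrank ℝ (Fin n → ℝ) :=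
        LinearMap.finrank_le_finrank_of_injective hinj
    _ = n := by rw [Module.finrank_fintype_fun_eq_card, Fintype.card_fin]

lemma sup_eigenspace_eq_map (C : Matrix (Fin p) (Fin p) ℝ) (hC : Cᵀ = C) (s : Set ℝ) :
    (⨆ μ : s, Module.End.eigenspace (Matrix.mulVecLin C) (μ : ℝ)) =
      Submodule.map (eL (p := p)).toLinearMap
        (Submodule.span ℝ (eBasis C hC '' {i | eVal C hC i ∈ s})) := by
  rw [← sup_eigenspace_eq_span C hC s, Submodule.map_iSup]
  simp only [eigenspace_eq_map]

end Stmt10Aux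

/-- `G` is monotone iff `ABᵀ + BAᵀ` has exactly `p − n` positive
eigenvalues counted with multiplicity, i.e. `dim V₊(BAᵀ) = p − n`. -/
theorem stmt10 {n p : ℕ} (A B : Matrix (Fin p) (Fin n) ℝ)
    (hrank : (Matrix.fromCols A B).rank = p) :
    IsMonotoneSet {q : (Fin n → ℝ) × (Fin n → ℝ) | A *ᵥ q.1 + B *ᵥ q.2 = 0} ↔
      Module.finrank ℝ (Vpos (B * Aᵀ)) + n = p := by
  classical
  set C : Matrix (Fin p) (Fin p) ℝ := B * Aᵀ + (B * Aᵀ)ᵀ with hCdef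
  have hC : Cᵀ = C := by
    rw [hCdef, Matrix.transpose_add, Matrix.transpose_transpose, add_comm]
  set SP : Submodule ℝ (Fin p → ℝ) :=
    Submodule.map (Stmt10Aux.eL (p := p)).toLinearMap
      (Submodule.span ℝ (Stmt10Aux.eBasis C hC '' {i | 0 < Stmt10Aux.eVal C hC i})) with hSPdef
  set SN : Submodule ℝ (Fin p → ℝ) :=
    Submodule.map (Stmt10Aux.eL (p := p)).toLinearMap
      (Submodule.span ℝ (Stmt10Aux.eBasis C hC '' {i | Stmt10Aux.eVal C hC i ≤ 0})) with hSNdef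
  have hVpos : Vpos (B * Aᵀ) = SP := Stmt10Aux.sup_eigenspace_eq_map C hC {t : ℝ | 0 < t}
  have hSPpos : ∀ u : Fin p → ℝ, u ∈ SP → u ≠ 0 → 0 < u ⬝ᵥ (C *ᵥ u) := fun u hu hne => by
    obtain ⟨w, hw, rfl⟩ := hu
    exact Stmt10Aux.pos_def_on C hC hw (fun h : w = 0 => hne (by rw [h, map_zero]))
  have hSNneg : ∀ u : Fin p → ℝ, u ∈ SN → u ⬝ᵥ (C *ᵥ u) ≤ 0 := fun u hu => by
    obtain ⟨w, hw, rfl⟩ := hu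
    exact Stmt10Aux.neg_semidef_on C hC hw
  have hdim : Module.finrank ℝ SP + Module.finrank ℝ SN = p := by
    have := Stmt10Aux.finranks_add C hC
    rw [← LinearEquiv.finrank_map_eq Stmt10Aux.eL,
      ← LinearEquiv.finrank_map_eq Stmt10Aux.eL] at this
    exact this
  -- quadratic form identities
  have hq : ∀ u : Fin p → ℝ, u ⬝ᵥ (C *ᵥ u) = 2 * ((Bᵀ *ᵥ u) ⬝ᵥ (Aᵀ *ᵥ u)) := by
    intro u
    have h1 : u ⬝ᵥ ((B * Aᵀ) *ᵥ u) = (Bᵀ *ᵥ u) ⬝ᵥ (Aᵀ *ᵥ u) := by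
      rw [← Matrix.mulVec_mulVec, Matrix.dotProduct_mulVec u B, ← Matrix.mulVec_transpose]
    have h2 : u ⬝ᵥ ((B * Aᵀ)ᵀ *ᵥ u) = (Aᵀ *ᵥ u) ⬝ᵥ (Bᵀ *ᵥ u) := by
      rw [Matrix.transpose_mul, Matrix.transpose_transpose, ← Matrix.mulVec_mulVec,
        Matrix.dotProduct_mulVec u A, ← Matrix.mulVec_transpose]
    have h3 : u ⬝ᵥ (C *ᵥ u) = u ⬝ᵥ ((B * Aᵀ) *ᵥ u) + u ⬝ᵥ ((B * Aᵀ)ᵀ *ᵥ u) := by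
      rw [hCdef, Matrix.add_mulVec, dotProduct_add]
    rw [h3, h1, h2, dotProduct_comm]; ring
  have hbil : ∀ (x y : Fin n → ℝ), A *ᵥ x + B *ᵥ y = 0 →
      ∀ u : Fin p → ℝ, x ⬝ᵥ (Aᵀ *ᵥ u) + (Bᵀ *ᵥ u) ⬝ᵥ y = 0 := by
    intro x y hxy u
    have h1 : x ⬝ᵥ (Aᵀ *ᵥ u) = (A *ᵥ x) ⬝ᵥ u := by
      rw [Matrix.dotProduct_mulVec x Aᵀ u, Matrix.vecMul_transpose]
    have h2 : (Bᵀ *ᵥ u) ⬝ᵥ y = (B *ᵥ y) ⬝ᵥ u := by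
      rw [dotProduct_comm, Matrix.dotProduct_mulVec y Bᵀ u, Matrix.vecMul_transpose]
    rw [h1, h2, ← add_dotProduct, hxy, zero_dotProduct]
  have hCmul : ∀ u : Fin p → ℝ, A *ᵥ (Bᵀ *ᵥ u) + B *ᵥ (Aᵀ *ᵥ u) = C *ᵥ u := by
    intro u
    rw [hCdef, Matrix.add_mulVec, Matrix.mulVec_mulVec, Matrix.mulVec_mulVec,
      Matrix.transpose_mul, Matrix.transpose_transpose, add_comm]
  -- the kernel
  set F : ((Fin n → ℝ) × (Fin n → ℝ)) →ₗ[ℝ] (Fin p → ℝ) :=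
    LinearMap.coprod (Matrix.mulVecLin A) (Matrix.mulVecLin B) with hFdef
  set K : Submodule ℝ ((Fin n → ℝ) × (Fin n → ℝ)) := LinearMap.ker F with hKdef
  have hKmem : ∀ v : (Fin n → ℝ) × (Fin n → ℝ), v ∈ K ↔ A *ᵥ v.1 + B *ᵥ v.2 = 0 := by
    intro v
    rw [hKdef, LinearMap.mem_ker, hFdef, LinearMap.coprod_apply,
      Matrix.mulVecLin_apply, Matrix.mulVecLin_apply]
  have hfr_pi : Module.finrank ℝ (Fin p → ℝ) = p := by
    rw [Module.finrank_fintype_fun_eq_card, Fintype.card_fin]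
  have htop : LinearMap.range (Matrix.mulVecLin (Matrix.fromCols A B)) = ⊤ := by
    apply Submodule.eq_top_of_finrank_eq
    rw [hfr_pi]; exact hrank
  have hFrange : LinearMap.range F = ⊤ := by
    rw [LinearMap.range_eq_top]
    intro v
    obtain ⟨w, hw⟩ := LinearMap.range_eq_top.mp htop v
    refine ⟨(w ∘ Sum.inl, w ∘ Sum.inr), ?_⟩
    have hw' : Sum.elim (w ∘ Sum.inl) (w ∘ Sum.inr) = w := by funext z; cases z <;> rfl
    show A *ᵥ (w ∘ Sum.inl) + B *ᵥ (w ∘ Sum.inr) = v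
    rw [← Matrix.fromCols_mulVec_sumElim, hw']
    exact hw
  have hKrank : Module.finrank ℝ K + p = 2 * n := by
    have h2 := LinearMap.finrank_range_add_finrank_ker F
    rw [hFrange, finrank_top, Module.finrank_prod, hfr_pi,
      Module.finrank_fintype_fun_eq_card, Fintype.card_fin] at h2
    rw [hKdef]
    omega
  -- the embedding φ
  set φ : (Fin p → ℝ) →ₗ[ℝ] ((Fin n → ℝ) × (Fin n → ℝ)) :=
    LinearMap.prod (Matrix.mulVecLin Bᵀ) (Matrix.mulVecLin Aᵀ) with hφdef
  have hφapp : ∀ u, φ u = (Bᵀ *ᵥ u, Aᵀ *ᵥ u) := fun u => rfl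
  have hkerT : LinearMap.ker (Matrix.mulVecLin (Matrix.fromCols A B)ᵀ) = ⊥ := by
    have hrt : Module.finrank ℝ
        (LinearMap.range (Matrix.mulVecLin (Matrix.fromCols A B)ᵀ)) = p := by
      have : ((Matrix.fromCols A B)ᵀ).rank = p := by
        rw [Matrix.rank_transpose]; exact hrank
      exact this
    have h2 := LinearMap.finrank_range_add_finrank_ker
      (Matrix.mulVecLin (Matrix.fromCols A B)ᵀ)
    rw [hfr_pi, hrt] at h2
    exact Submodule.finrank_eq_zero.mp (by omega)
  have hφinj : Function.Injective φ := by
    rw [← LinearMap.ker_eq_bot]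
    refine (Submodule.eq_bot_iff _).mpr fun u hu => ?_
    have h1 : Bᵀ *ᵥ u = 0 ∧ Aᵀ *ᵥ u = 0 := by
      have := LinearMap.mem_ker.mp hu
      rw [hφapp u, Prod.ext_iff] at this
      exact this
    have h2 : Matrix.mulVecLin (Matrix.fromCols A B)ᵀ u = 0 := by
      rw [Matrix.mulVecLin_apply, Matrix.transpose_fromCols, Matrix.fromRows_mulVec,
        h1.1, h1.2]
      funext z; cases z <;> rfl
    have h3 : u ∈ LinearMap.ker (Matrix.mulVecLin (Matrix.fromCols A B)ᵀ) := h2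
    rw [hkerT] at h3
    exact h3
  have hφK : ∀ u : Fin p → ℝ, φ u ∈ K ↔ C *ᵥ u = 0 := by
    intro u
    rw [hKmem (φ u), hφapp u]
    show A *ᵥ (Bᵀ *ᵥ u) + B *ᵥ (Aᵀ *ᵥ u) = 0 ↔ _
    rw [hCmul u]
  have hφq : ∀ u : Fin p → ℝ, 2 * ((φ u).1 ⬝ᵥ (φ u).2) = u ⬝ᵥ (C *ᵥ u) := by
    intro u; rw [hφapp u, hq u]
  -- finrank of mapped spaces
  have hmapSN : Module.finrank ℝ (Submodule.map φ SN) = Module.finrank ℝ SN :=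
    ((Submodule.equivMapOfInjective φ hφinj SN).finrank_eq).symm
  have hmapSP : Module.finrank ℝ (Submodule.map φ SP) = Module.finrank ℝ SP :=
    ((Submodule.equivMapOfInjective φ hφinj SP).finrank_eq).symm
  have hSNle : Module.finrank ℝ SN ≤ n := by
    rw [← hmapSN]
    refine Stmt10Aux.finrank_le_of_nonpos _ ?_
    rintro w ⟨u, hu, rfl⟩
    have h1 := hSNneg u hu
    have h2 := hφq u
    linarith
  rw [hVpos]
  constructor
  · -- monotone → finrank SP + n = p
    intro hmono
    have hK0 : ∀ v, v ∈ K → 0 ≤ v.1 ⬝ᵥ v.2 := by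
      intro v hv
      have h0 : (0 : (Fin n → ℝ) × (Fin n → ℝ)) ∈
          {q : (Fin n → ℝ) × (Fin n → ℝ) | A *ᵥ q.1 + B *ᵥ q.2 = 0} := by
        simp [Matrix.mulVec_zero]
      have := hmono v ((hKmem v).mp hv) 0 h0
      simpa using this
    have hW2 : ∀ w, w ∈ K ⊔ Submodule.map φ SP → 0 ≤ w.1 ⬝ᵥ w.2 := by
      intro w hw
      rw [Submodule.mem_sup] at hw
      obtain ⟨k, hk, m, hm, rfl⟩ := hw
      obtain ⟨u, hu, rfl⟩ := hm
      rw [hφapp u]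
      have e : (k + (Bᵀ *ᵥ u, Aᵀ *ᵥ u)).1 ⬝ᵥ (k + (Bᵀ *ᵥ u, Aᵀ *ᵥ u)).2
          = k.1 ⬝ᵥ k.2 + (k.1 ⬝ᵥ (Aᵀ *ᵥ u) + (Bᵀ *ᵥ u) ⬝ᵥ k.2)
            + (Bᵀ *ᵥ u) ⬝ᵥ (Aᵀ *ᵥ u) := by
        show (k.1 + Bᵀ *ᵥ u) ⬝ᵥ (k.2 + Aᵀ *ᵥ u) = _
        rw [dotProduct_add, add_dotProduct, add_dotProduct]
        ring
      rw [e, hbil k.1 k.2 ((hKmem k).mp hk) u]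
      have h3 : 0 ≤ (Bᵀ *ᵥ u) ⬝ᵥ (Aᵀ *ᵥ u) := by
        rcases eq_or_ne u 0 with rfl | hne
        · simp [Matrix.mulVec_zero]
        · have h4 := hSPpos u hu hne
          have h5 := hq u
          linarith
      have h6 := hK0 k hk
      linarith
    have hinf : K ⊓ Submodule.map φ SP = ⊥ := by
      refine (Submodule.eq_bot_iff _).mpr fun v hv => ?_
      obtain ⟨hvK, u, hu, rfl⟩ := hv
      have h1 : C *ᵥ u = 0 := (hφK u).mp hvK
      have h2 : u = 0 := by
        by_contra hne
        have h3 := hSPpos u hu hne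
        rw [h1] at h3
        simp [dotProduct_zero] at h3
      rw [h2, map_zero]
    have hfr2 := Submodule.finrank_sup_add_finrank_inf_eq K (Submodule.map φ SP)
    rw [hinf, finrank_bot, hmapSP] at hfr2
    have hW2n : Module.finrank ℝ ↥(K ⊔ Submodule.map φ SP) ≤ n :=
      Stmt10Aux.finrank_le_of_nonneg _ hW2
    have hKeq : Module.finrank ℝ ↥(LinearMap.ker F) = Module.finrank ℝ ↥K := rfl
    omega
  · -- finrank SP + n = p → monotone
    intro hpn
    have hnn : ∀ v, v ∈ K → 0 ≤ v.1 ⬝ᵥ v.2 := by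
      by_contra hcon
      push_neg at hcon
      obtain ⟨v, hvK, hvneg⟩ := hcon
      have hv0 : v ≠ 0 := by
        rintro rfl
        simp [zero_dotProduct] at hvneg
      set Wv : Submodule ℝ ((Fin n → ℝ) × (Fin n → ℝ)) :=
        Submodule.span ℝ ({v} : Set ((Fin n → ℝ) × (Fin n → ℝ))) with hWvdef
      have hW3 : ∀ w, w ∈ Wv ⊔ Submodule.map φ SN →
          w.1 ⬝ᵥ w.2 ≤ 0 := by
        intro w hw
        rw [Submodule.mem_sup] at hw
        obtain ⟨sv, hsv, m, hm, rfl⟩ := hw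
        obtain ⟨t, rfl⟩ := Submodule.mem_span_singleton.mp hsv
        obtain ⟨u, hu, rfl⟩ := hm
        rw [hφapp u]
        have e : (t • v + (Bᵀ *ᵥ u, Aᵀ *ᵥ u)).1 ⬝ᵥ (t • v + (Bᵀ *ᵥ u, Aᵀ *ᵥ u)).2
            = t * t * (v.1 ⬝ᵥ v.2) + t * (v.1 ⬝ᵥ (Aᵀ *ᵥ u) + (Bᵀ *ᵥ u) ⬝ᵥ v.2)
              + (Bᵀ *ᵥ u) ⬝ᵥ (Aᵀ *ᵥ u) := by
          show (t • v.1 + Bᵀ *ᵥ u) ⬝ᵥ (t • v.2 + Aᵀ *ᵥ u) = _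
          rw [dotProduct_add, add_dotProduct, add_dotProduct,
            smul_dotProduct, smul_dotProduct, dotProduct_smul,
            dotProduct_smul]
          simp only [smul_eq_mul]
          ring
        rw [e, hbil v.1 v.2 ((hKmem v).mp hvK) u]
        have h1 : (Bᵀ *ᵥ u) ⬝ᵥ (Aᵀ *ᵥ u) ≤ 0 := by
          have h2 := hSNneg u hu
          have h3 := hq u
          linarith
        have h4 : t * t * (v.1 ⬝ᵥ v.2) ≤ 0 :=
          mul_nonpos_of_nonneg_of_nonpos (mul_self_nonneg t) (le_of_lt hvneg)
        linarith
      have hinf3 : Wv ⊓ Submodule.map φ SN = ⊥ := by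
        refine (Submodule.eq_bot_iff _).mpr fun w hw => ?_
        obtain ⟨hw1, u, hu, hw2⟩ := hw
        obtain ⟨t, ht⟩ := Submodule.mem_span_singleton.mp hw1
        have htv : t • v = φ u := by rw [ht, ← hw2]
        have hwK : φ u ∈ K := by
          rw [← htv]; exact Submodule.smul_mem K t hvK
        have hCu : C *ᵥ u = 0 := (hφK u).mp hwK
        have hqu : (φ u).1 ⬝ᵥ (φ u).2 = 0 := by
          have h := hφq u
          rw [hCu] at h
          simp only [dotProduct_zero] at h
          linarith
        have hqw2 : t * t * (v.1 ⬝ᵥ v.2) = 0 := by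
          have e : (t • v).1 ⬝ᵥ (t • v).2 = t * t * (v.1 ⬝ᵥ v.2) := by
            show (t • v.1) ⬝ᵥ (t • v.2) = _
            rw [smul_dotProduct, dotProduct_smul]
            simp only [smul_eq_mul]; ring
          rw [← e, htv, hqu]
        have ht0 : t = 0 := by
          rcases mul_eq_zero.mp hqw2 with h | h
          · rcases mul_eq_zero.mp h with h' | h' <;> exact h'
          · exact absurd h (ne_of_lt hvneg)
        rw [← ht, ht0, zero_smul]
      have hfr3 := Submodule.finrank_sup_add_finrank_inf_eq Wv (Submodule.map φ SN)
      have hWv1 : Module.finrank ℝ ↥Wv = 1 := finrank_span_singleton hv0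
      rw [hinf3, finrank_bot, hmapSN, hWv1] at hfr3
      have hW3n : Module.finrank ℝ ↥(Wv ⊔ Submodule.map φ SN) ≤ n :=
        Stmt10Aux.finrank_le_of_nonpos _ hW3
      omega
    intro a ha b hb
    have haK : a ∈ K := (hKmem a).mpr ha
    have hbK : b ∈ K := (hKmem b).mpr hb
    have := hnn (a - b) (sub_mem haK hbK)
    simpa using this
end

section
/- Let n, p ∈ ℕ, let A, B ∈ ℝ^{p×n}, assume the p×2n matrix (A B) has rank p, and let G be the linear relation with graph gra G = {(x,x*) ∈ ℝⁿ × ℝⁿ : Ax + Bx* = 0}. Assume G is monotone. Then the linear relation G̃ with graph gra G̃ = gra G + {(Bᵀu, Aᵀu) : u ∈ V₊(BAᵀ)} is maximally monotone and gra G ⊆ gra G̃. -/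
open Matrix Pointwise

set_option maxHeartbeats 1000000

section SpectralAux

variable {m : ℕ}

lemma dot_mulVec_symm {S : Matrix (Fin m) (Fin m) ℝ} (hS : Sᵀ = S) (u v : Fin m → ℝ) :
    u ⬝ᵥ (S *ᵥ v) = (S *ᵥ u) ⬝ᵥ v := by
  rw [Matrix.dotProduct_mulVec]
  congr 1
  conv_lhs => rw [← hS]
  rw [Matrix.vecMul_transpose]

lemma eig_orth {S : Matrix (Fin m) (Fin m) ℝ} (hS : Sᵀ = S) {μ ν : ℝ} (hne : μ ≠ ν)
    {u v : Fin m → ℝ} (hu : u ∈ Module.End.eigenspace (Matrix.mulVecLin S) μ)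
    (hv : v ∈ Module.End.eigenspace (Matrix.mulVecLin S) ν) : u ⬝ᵥ v = 0 := by
  rw [Module.End.mem_eigenspace_iff, Matrix.mulVecLin_apply] at hu hv
  have h1 : (S *ᵥ u) ⬝ᵥ v = μ * (u ⬝ᵥ v) := by rw [hu, smul_dotProduct]; simp
  have h2 : (S *ᵥ u) ⬝ᵥ v = ν * (u ⬝ᵥ v) := by
    rw [← dot_mulVec_symm hS, hv, dotProduct_smul]; simp
  rcases mul_eq_mul_right_iff.1 (h1.symm.trans h2) with h | h
  · exact absurd h hne
  · exact h

/-- A vector orthogonal to each member of a family of submodules is orthogonal to the sup. -/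
lemma dot_eq_zero_of_mem_iSup {ι : Sort*} (V : ι → Submodule ℝ (Fin m → ℝ)) {w u : Fin m → ℝ}
    (h : ∀ i, ∀ v ∈ V i, w ⬝ᵥ v = 0) (hu : u ∈ ⨆ i, V i) : w ⬝ᵥ u = 0 := by
  let f : (Fin m → ℝ) →ₗ[ℝ] ℝ :=
    { toFun := fun v => w ⬝ᵥ v
      map_add' := fun a b => dotProduct_add w a b
      map_smul' := fun c a => by simp [dotProduct_smul] }
  exact (iSup_le fun i v hv => LinearMap.mem_ker.2 (h i v hv) : (⨆ i, V i) ≤ LinearMap.ker f) hu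

lemma euclid_inner_eq_dot (x y : EuclideanSpace ℝ (Fin m)) :
    (inner ℝ x y : ℝ) = ⇑x ⬝ᵥ ⇑y := by
  simp [PiLp.inner_apply, dotProduct, mul_comm]

lemma quad_eq_sum {S : Matrix (Fin m) (Fin m) ℝ} (hS : Sᵀ = S) (hA : S.IsHermitian)
    (u : Fin m → ℝ) :
    u ⬝ᵥ (S *ᵥ u) = ∑ i, hA.eigenvalues i * (⇑(hA.eigenvectorBasis i) ⬝ᵥ u) ^ 2 := by
  classical
  set b := hA.eigenvectorBasis
  let u' : EuclideanSpace ℝ (Fin m) := (WithLp.equiv 2 (Fin m → ℝ)).symm u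
  let y' : EuclideanSpace ℝ (Fin m) := (WithLp.equiv 2 (Fin m → ℝ)).symm (S *ᵥ u)
  have hu' : ⇑u' = u := rfl
  have hy' : ⇑y' = S *ᵥ u := rfl
  have h := b.sum_inner_mul_inner u' y'
  rw [euclid_inner_eq_dot, hu', hy'] at h
  rw [← h]
  refine Finset.sum_congr rfl fun i _ => ?_
  rw [euclid_inner_eq_dot, euclid_inner_eq_dot, hu', hy']
  have hb : S *ᵥ ⇑(b i) = hA.eigenvalues i • ⇑(b i) := hA.mulVec_eigenvectorBasis i
  have : ⇑(b i) ⬝ᵥ (S *ᵥ u) = hA.eigenvalues i * (⇑(b i) ⬝ᵥ u) := by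
    rw [dot_mulVec_symm hS, hb, smul_dotProduct]; simp
  rw [this, dotProduct_comm u]
  ring

variable {M : Matrix (Fin m) (Fin m) ℝ}

lemma symm_add_transpose (M : Matrix (Fin m) (Fin m) ℝ) : (M + Mᵀ)ᵀ = M + Mᵀ := by
  rw [Matrix.transpose_add, Matrix.transpose_transpose, add_comm]

lemma isHermitian_add_transpose (M : Matrix (Fin m) (Fin m) ℝ) : (M + Mᵀ).IsHermitian := by
  rw [Matrix.IsHermitian, Matrix.conjTranspose_eq_transpose_of_trivial]
  exact symm_add_transpose M

lemma eigenbasis_mem (i : Fin m) :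
    ⇑((isHermitian_add_transpose M).eigenvectorBasis i) ∈
      Module.End.eigenspace (Matrix.mulVecLin (M + Mᵀ))
        ((isHermitian_add_transpose M).eigenvalues i) := by
  rw [Module.End.mem_eigenspace_iff, Matrix.mulVecLin_apply]
  exact (isHermitian_add_transpose M).mulVec_eigenvectorBasis i

lemma mem_vpos_orth {μ' : ℝ} (hμ' : μ' ≤ 0) {w u : Fin m → ℝ}
    (hw : w ∈ Module.End.eigenspace (Matrix.mulVecLin (M + Mᵀ)) μ') (hu : u ∈ Vpos M) :
    w ⬝ᵥ u = 0 := by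
  refine dot_eq_zero_of_mem_iSup _ (fun μ v hv => ?_) hu
  exact eig_orth (symm_add_transpose M)
    (by have := μ.2; intro h; rw [h] at hμ'; linarith) hw hv

lemma mem_vzn_orth {μ' : ℝ} (hμ' : 0 < μ') {w u : Fin m → ℝ}
    (hw : w ∈ Module.End.eigenspace (Matrix.mulVecLin (M + Mᵀ)) μ')
    (hu : u ∈ Vzero M ⊔ Vneg M) : w ⬝ᵥ u = 0 := by
  rcases Submodule.mem_sup.1 hu with ⟨a, ha, b, hb, rfl⟩
  rw [dotProduct_add]
  have h1 : w ⬝ᵥ a = 0 :=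
    eig_orth (symm_add_transpose M) hμ'.ne' hw ha
  have h2 : w ⬝ᵥ b = 0 := by
    refine dot_eq_zero_of_mem_iSup _ (fun ν v hv => ?_) hb
    exact eig_orth (symm_add_transpose M)
      (by have := ν.2; intro h; rw [h] at hμ'; linarith) hw hv
  rw [h1, h2, add_zero]

lemma vpos_quad_nonneg {u : Fin m → ℝ} (hu : u ∈ Vpos M) :
    0 ≤ u ⬝ᵥ ((M + Mᵀ) *ᵥ u) := by
  rw [quad_eq_sum (symm_add_transpose M) (isHermitian_add_transpose M) u]
  refine Finset.sum_nonneg fun i _ => ?_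
  rcases le_or_gt ((isHermitian_add_transpose M).eigenvalues i) 0 with h | h
  · rw [mem_vpos_orth h (eigenbasis_mem i) hu]
    simp
  · positivity

lemma vzn_quad_nonpos {u : Fin m → ℝ} (hu : u ∈ Vzero M ⊔ Vneg M) :
    u ⬝ᵥ ((M + Mᵀ) *ᵥ u) ≤ 0 := by
  rw [quad_eq_sum (symm_add_transpose M) (isHermitian_add_transpose M) u]
  refine Finset.sum_nonpos fun i _ => ?_
  rcases le_or_gt ((isHermitian_add_transpose M).eigenvalues i) 0 with h | h
  · have : (⇑((isHermitian_add_transpose M).eigenvectorBasis i) ⬝ᵥ u) ^ 2 ≥ 0 := sq_nonneg _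
    nlinarith
  · rw [mem_vzn_orth h (eigenbasis_mem i) hu]
    simp

lemma top_le_vsup : (⊤ : Submodule ℝ (Fin m → ℝ)) ≤ Vpos M ⊔ (Vzero M ⊔ Vneg M) := by
  intro u _
  classical
  set hA := isHermitian_add_transpose M with hhA
  set b := hA.eigenvectorBasis with hb
  let g := WithLp.linearEquiv 2 ℝ (Fin m → ℝ)
  let u' : EuclideanSpace ℝ (Fin m) := (WithLp.equiv 2 (Fin m → ℝ)).symm u
  have hrepr : ∑ i, b.repr u' i • b i = u' := b.sum_repr u'
  have hu : u = ∑ i, b.repr u' i • ⇑(b i) := by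
    have := congrArg g hrepr
    rw [map_sum] at this
    simp only [_root_.map_smul] at this
    exact this.symm
  rw [hu]
  refine Submodule.sum_mem _ fun i _ => Submodule.smul_mem _ _ ?_
  have hmem := eigenbasis_mem (M := M) i
  rcases lt_trichotomy (hA.eigenvalues i) 0 with h | h | h
  · refine Submodule.mem_sup_right (Submodule.mem_sup_right ?_)
    exact (le_iSup (fun μ : {t : ℝ // t < 0} =>
      Module.End.eigenspace (Matrix.mulVecLin (M + Mᵀ)) (μ : ℝ)) ⟨_, h⟩) hmem
  · refine Submodule.mem_sup_right (Submodule.mem_sup_left ?_)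
    rw [Vzero, ← h]
    exact hmem
  · refine Submodule.mem_sup_left ?_
    exact (le_iSup (fun μ : {t : ℝ // 0 < t} =>
      Module.End.eigenspace (Matrix.mulVecLin (M + Mᵀ)) (μ : ℝ)) ⟨_, h⟩) hmem

end SpectralAux

section DimAux

variable {n : ℕ}

lemma finrank_map_of_inj {m : ℕ} (f : (Fin m → ℝ) →ₗ[ℝ] ((Fin n → ℝ) × (Fin n → ℝ)))
    (hf : Function.Injective f) (q : Submodule ℝ (Fin m → ℝ)) :
    Module.finrank ℝ (q.map f) = Module.finrank ℝ q := by
  have hinj2 : Function.Injective ⇑(f ∘ₗ q.subtype) := by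
    rw [LinearMap.coe_comp]; exact hf.comp q.injective_subtype
  calc Module.finrank ℝ (q.map f)
      = Module.finrank ℝ (LinearMap.range (f ∘ₗ q.subtype)) := by
        rw [LinearMap.range_comp, Submodule.range_subtype]
    _ = Module.finrank ℝ q := LinearMap.finrank_range_of_inj hinj2

lemma finrank_le_of_nonneg (W : Submodule ℝ ((Fin n → ℝ) × (Fin n → ℝ)))
    (h : ∀ z ∈ W, 0 ≤ z.1 ⬝ᵥ z.2) : Module.finrank ℝ W ≤ n := by
  let f : (Fin n → ℝ) →ₗ[ℝ] ((Fin n → ℝ) × (Fin n → ℝ)) :=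
    LinearMap.prod LinearMap.id (-LinearMap.id)
  have hinj : Function.Injective f := fun x y hxy => congrArg Prod.fst hxy
  have hN : Module.finrank ℝ (LinearMap.range f) = n := by
    rw [LinearMap.finrank_range_of_inj hinj, Module.finrank_fin_fun]
  have hWN : W ⊓ LinearMap.range f = ⊥ := by
    rw [eq_bot_iff]
    rintro z ⟨hzW, x, rfl⟩
    have h0 := h _ hzW
    have hfx1 : (f x).1 = x := rfl
    have hfx2 : (f x).2 = -x := rfl
    rw [hfx1, hfx2, dotProduct_neg] at h0
    have hx : x = 0 := dotProduct_self_eq_zero.1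
      (le_antisymm (by linarith) (Finset.sum_nonneg fun i _ => mul_self_nonneg (x i)))
    simp [hx, Submodule.mem_bot]
  have hsum := Submodule.finrank_sup_add_finrank_inf_eq W (LinearMap.range f)
  rw [hWN] at hsum
  have hle : Module.finrank ℝ ↥(W ⊔ LinearMap.range f) ≤ n + n := by
    have h2 : Module.finrank ℝ ((Fin n → ℝ) × (Fin n → ℝ)) = n + n := by simp
    have := Submodule.finrank_le (W ⊔ LinearMap.range f)
    rwa [h2] at this
  simp only [finrank_bot, add_zero] at hsum
  omega

lemma finrank_le_of_nonpos (W : Submodule ℝ ((Fin n → ℝ) × (Fin n → ℝ)))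
    (h : ∀ z ∈ W, z.1 ⬝ᵥ z.2 ≤ 0) : Module.finrank ℝ W ≤ n := by
  let f : (Fin n → ℝ) →ₗ[ℝ] ((Fin n → ℝ) × (Fin n → ℝ)) :=
    LinearMap.prod LinearMap.id LinearMap.id
  have hinj : Function.Injective f := fun x y hxy => congrArg Prod.fst hxy
  have hN : Module.finrank ℝ (LinearMap.range f) = n := by
    rw [LinearMap.finrank_range_of_inj hinj, Module.finrank_fin_fun]
  have hWN : W ⊓ LinearMap.range f = ⊥ := by
    rw [eq_bot_iff]
    rintro z ⟨hzW, x, rfl⟩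
    have h0 := h _ hzW
    have hfx1 : (f x).1 = x := rfl
    have hfx2 : (f x).2 = x := rfl
    rw [hfx1, hfx2] at h0
    have hx : x = 0 := dotProduct_self_eq_zero.1
      (le_antisymm h0 (Finset.sum_nonneg fun i _ => mul_self_nonneg (x i)))
    simp [hx, Submodule.mem_bot]
  have hsum := Submodule.finrank_sup_add_finrank_inf_eq W (LinearMap.range f)
  rw [hWN] at hsum
  have hle : Module.finrank ℝ ↥(W ⊔ LinearMap.range f) ≤ n + n := by
    have h2 : Module.finrank ℝ ((Fin n → ℝ) × (Fin n → ℝ)) = n + n := by simp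
    have := Submodule.finrank_le (W ⊔ LinearMap.range f)
    rwa [h2] at this
  simp only [finrank_bot, add_zero] at hsum
  omega

end DimAux

section MainAux

variable {n p : ℕ}

lemma quad_LU (A B : Matrix (Fin p) (Fin n) ℝ) (u : Fin p → ℝ) :
    (Bᵀ *ᵥ u) ⬝ᵥ (Aᵀ *ᵥ u) = u ⬝ᵥ ((B * Aᵀ) *ᵥ u) := by
  rw [Matrix.mulVec_transpose, ← Matrix.dotProduct_mulVec, Matrix.mulVec_mulVec]

lemma quad_double (M : Matrix (Fin p) (Fin p) ℝ) (u : Fin p → ℝ) :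
    u ⬝ᵥ ((M + Mᵀ) *ᵥ u) = 2 * (u ⬝ᵥ (M *ᵥ u)) := by
  rw [Matrix.add_mulVec, dotProduct_add]
  have : u ⬝ᵥ (Mᵀ *ᵥ u) = u ⬝ᵥ (M *ᵥ u) := by
    rw [Matrix.mulVec_transpose, dotProduct_comm, ← Matrix.dotProduct_mulVec]
  rw [this]; ring

lemma cross_zero (A B : Matrix (Fin p) (Fin n) ℝ) (g : (Fin n → ℝ) × (Fin n → ℝ))
    (hg : A *ᵥ g.1 + B *ᵥ g.2 = 0) (u : Fin p → ℝ) :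
    g.1 ⬝ᵥ (Aᵀ *ᵥ u) + (Bᵀ *ᵥ u) ⬝ᵥ g.2 = 0 := by
  have h1 : g.1 ⬝ᵥ (Aᵀ *ᵥ u) = (A *ᵥ g.1) ⬝ᵥ u := by
    rw [Matrix.dotProduct_mulVec, Matrix.vecMul_transpose]
  have h2 : (Bᵀ *ᵥ u) ⬝ᵥ g.2 = (B *ᵥ g.2) ⬝ᵥ u := by
    rw [dotProduct_comm, Matrix.dotProduct_mulVec, Matrix.vecMul_transpose]
  rw [h1, h2, ← add_dotProduct, hg, zero_dotProduct]

end MainAux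

/-- if `G` is monotone, then
`gra G̃ = gra G + {(Bᵀu, Aᵀu) : u ∈ V₊(BAᵀ)}` is maximally monotone and extends `gra G`. -/
theorem stmt12 {n p : ℕ} (A B : Matrix (Fin p) (Fin n) ℝ)
    (hrank : (Matrix.fromCols A B).rank = p)
    (hmono : IsMonotoneSet {q : (Fin n → ℝ) × (Fin n → ℝ) | A *ᵥ q.1 + B *ᵥ q.2 = 0}) :
    IsMaxMonotoneSet
      ({q : (Fin n → ℝ) × (Fin n → ℝ) | A *ᵥ q.1 + B *ᵥ q.2 = 0} +
        ((fun u => (Bᵀ *ᵥ u, Aᵀ *ᵥ u)) '' ↑(Vpos (B * Aᵀ)))) ∧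
    {q : (Fin n → ℝ) × (Fin n → ℝ) | A *ᵥ q.1 + B *ᵥ q.2 = 0} ⊆
      {q : (Fin n → ℝ) × (Fin n → ℝ) | A *ᵥ q.1 + B *ᵥ q.2 = 0} +
        ((fun u => (Bᵀ *ᵥ u, Aᵀ *ᵥ u)) '' ↑(Vpos (B * Aᵀ))) := by
  classical
  -- the subset claim (used in both parts)
  have hsubset : {q : (Fin n → ℝ) × (Fin n → ℝ) | A *ᵥ q.1 + B *ᵥ q.2 = 0} ⊆
      {q : (Fin n → ℝ) × (Fin n → ℝ) | A *ᵥ q.1 + B *ᵥ q.2 = 0} +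
        ((fun u => (Bᵀ *ᵥ u, Aᵀ *ᵥ u)) '' ↑(Vpos (B * Aᵀ))) := by
    intro q hq
    have h0 : (0 : (Fin n → ℝ) × (Fin n → ℝ)) ∈ ((fun u => (Bᵀ *ᵥ u, Aᵀ *ᵥ u)) '' ↑(Vpos (B * Aᵀ))) := by
      exact ⟨0, Submodule.zero_mem _, by simp [Matrix.mulVec_zero, Prod.ext_iff]⟩
    simpa using Set.add_mem_add hq h0
  refine ⟨?_, hsubset⟩
  -- set up linear algebra
  set Mm := B * Aᵀ with hMm
  let e := LinearEquiv.sumArrowLequivProdArrow (Fin n) (Fin n) ℝ ℝ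
  let F := (Matrix.fromCols A B).mulVecLin
  let ℓ : ((Fin n → ℝ) × (Fin n → ℝ)) →ₗ[ℝ] (Fin p → ℝ) := F ∘ₗ (e.symm : _ →ₗ[ℝ] _)
  have hesymm : ∀ q : (Fin n → ℝ) × (Fin n → ℝ), (e.symm q : Fin n ⊕ Fin n → ℝ) = Sum.elim q.1 q.2 := by
    intro q; funext x; cases x <;> rfl
  have hℓ : ∀ q : (Fin n → ℝ) × (Fin n → ℝ), ℓ q = A *ᵥ q.1 + B *ᵥ q.2 := by
    intro q
    show F (e.symm q) = _
    rw [hesymm, Matrix.mulVecLin_apply, Matrix.fromCols_mulVec_sumElim]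
  set G : Submodule ℝ ((Fin n → ℝ) × (Fin n → ℝ)) := LinearMap.ker ℓ with hG
  have hGset : {q : (Fin n → ℝ) × (Fin n → ℝ) | A *ᵥ q.1 + B *ᵥ q.2 = 0} = (G : Set _) := by
    ext q; simp [hG, LinearMap.mem_ker, hℓ]
  let L : (Fin p → ℝ) →ₗ[ℝ] ((Fin n → ℝ) × (Fin n → ℝ)) :=
    LinearMap.prod (Bᵀ.mulVecLin) (Aᵀ.mulVecLin)
  have hL : ∀ u, L u = (Bᵀ *ᵥ u, Aᵀ *ᵥ u) := fun u => rfl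
  set T : Submodule ℝ ((Fin n → ℝ) × (Fin n → ℝ)) := G ⊔ (Vpos Mm).map L with hT
  have hTset : {q : (Fin n → ℝ) × (Fin n → ℝ) | A *ᵥ q.1 + B *ᵥ q.2 = 0} +
      ((fun u => (Bᵀ *ᵥ u, Aᵀ *ᵥ u)) '' ↑(Vpos Mm)) = (T : Set _) := by
    rw [hGset, hT, Submodule.coe_sup, Submodule.map_coe]
    rfl
  -- nonnegativity of the quadratic form on T
  have hq : ∀ z ∈ T, 0 ≤ z.1 ⬝ᵥ z.2 := by
    intro z hz
    rcases Submodule.mem_sup.1 hz with ⟨g, hg, w, hw, rfl⟩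
    rcases hw with ⟨u, hu, rfl⟩
    have hgset : A *ᵥ g.1 + B *ᵥ g.2 = 0 := by
      have := (LinearMap.mem_ker.1 hg); rwa [hℓ] at this
    have h0 : (0 : (Fin n → ℝ) × (Fin n → ℝ)) ∈
        {q : (Fin n → ℝ) × (Fin n → ℝ) | A *ᵥ q.1 + B *ᵥ q.2 = 0} := by
      simp [Set.mem_setOf_eq, Matrix.mulVec_zero]
    have hgg : 0 ≤ g.1 ⬝ᵥ g.2 := by
      have := hmono g hgset 0 h0
      simpa using this
    have hqu : 0 ≤ u ⬝ᵥ (Mm *ᵥ u) := by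
      have := vpos_quad_nonneg hu
      rw [quad_double] at this
      linarith
    have hcross := cross_zero A B g hgset u
    have hLU := quad_LU A B u
    rw [hL u]
    show 0 ≤ (g.1 + Bᵀ *ᵥ u) ⬝ᵥ (g.2 + Aᵀ *ᵥ u)
    rw [dotProduct_add, add_dotProduct, add_dotProduct, hLU, ← hMm]
    nlinarith [hgg, hqu, hcross]
  -- injectivity of L
  have hL'inj : LinearMap.ker ((Matrix.fromCols A B)ᵀ.mulVecLin) = ⊥ := by
    have h1 := LinearMap.finrank_range_add_finrank_ker ((Matrix.fromCols A B)ᵀ.mulVecLin)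
    have h2 : Module.finrank ℝ ↥(LinearMap.range ((Matrix.fromCols A B)ᵀ.mulVecLin)) = p := by
      have := Matrix.rank_transpose (Matrix.fromCols A B)
      rw [hrank] at this
      exact this
    rw [h2, Module.finrank_fin_fun] at h1
    have h3 : Module.finrank ℝ ↥(LinearMap.ker ((Matrix.fromCols A B)ᵀ.mulVecLin)) = 0 := by omega
    exact Submodule.finrank_eq_zero.1 h3
  have hLinj : Function.Injective L := by
    rw [← LinearMap.ker_eq_bot]
    rw [eq_bot_iff]
    intro u hu
    have hu' : Bᵀ *ᵥ u = 0 ∧ Aᵀ *ᵥ u = 0 := by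
      have := LinearMap.mem_ker.1 hu
      rw [hL] at this
      exact ⟨congrArg Prod.fst this, congrArg Prod.snd this⟩
    have : u ∈ LinearMap.ker ((Matrix.fromCols A B)ᵀ.mulVecLin) := by
      rw [LinearMap.mem_ker, Matrix.mulVecLin_apply, Matrix.transpose_fromCols,
        Matrix.fromRows_mulVec, hu'.1, hu'.2]
      funext x; cases x <;> rfl
    rw [hL'inj] at this
    simpa using this
  -- G ⊓ L(Vpos) = ⊥
  have hinf : G ⊓ (Vpos Mm).map L = ⊥ := by
    rw [eq_bot_iff]
    rintro z ⟨hzG, u, hu, rfl⟩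
    have h1 : A *ᵥ (Bᵀ *ᵥ u) + B *ᵥ (Aᵀ *ᵥ u) = 0 := by
      have := LinearMap.mem_ker.1 hzG; rwa [hℓ, hL] at this
    have h2 : (Mm + Mmᵀ) *ᵥ u = 0 := by
      rw [Matrix.add_mulVec]
      rw [Matrix.mulVec_mulVec, Matrix.mulVec_mulVec] at h1
      have hABt : Mmᵀ = A * Bᵀ := by
        rw [hMm, Matrix.transpose_mul, Matrix.transpose_transpose]
      rw [hABt, hMm, add_comm]
      exact h1
    have h3 : u ∈ Module.End.eigenspace (Matrix.mulVecLin (Mm + Mmᵀ)) 0 := by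
      rw [Module.End.mem_eigenspace_iff, Matrix.mulVecLin_apply, h2, zero_smul]
    have h4 : u ⬝ᵥ u = 0 := mem_vpos_orth le_rfl h3 hu
    have h5 : u = 0 := dotProduct_self_eq_zero.1 h4
    rw [h5]
    simp [Submodule.mem_bot]
  -- dimension of G
  have hdimG : Module.finrank ℝ ↥G + p = n + n := by
    have h1 := LinearMap.finrank_range_add_finrank_ker ℓ
    have hrange : LinearMap.range ℓ = LinearMap.range F := by
      apply le_antisymm
      · rintro z ⟨q, rfl⟩
        exact ⟨e.symm q, rfl⟩
      · rintro z ⟨v, rfl⟩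
        refine ⟨e v, ?_⟩
        show F (e.symm (e v)) = F v
        rw [LinearEquiv.symm_apply_apply]
    have h2 : Module.finrank ℝ ↥(LinearMap.range ℓ) = p := by
      rw [hrange]
      unfold Matrix.rank at hrank
      exact hrank
    have h3 : Module.finrank ℝ ((Fin n → ℝ) × (Fin n → ℝ)) = n + n := by simp
    rw [h2, h3, ← hG] at h1
    omega
  -- dimension of Vpos
  have hdimVZN : Module.finrank ℝ ↥(Vzero Mm ⊔ Vneg Mm) ≤ n := by
    have hmap : ∀ z ∈ (Vzero Mm ⊔ Vneg Mm).map L, z.1 ⬝ᵥ z.2 ≤ 0 := by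
      rintro z ⟨u, hu, rfl⟩
      rw [hL]
      show (Bᵀ *ᵥ u) ⬝ᵥ (Aᵀ *ᵥ u) ≤ 0
      rw [quad_LU, ← hMm]
      have := vzn_quad_nonpos hu
      rw [quad_double] at this
      linarith
    have := finrank_le_of_nonpos _ hmap
    rwa [finrank_map_of_inj L hLinj] at this
  have hdimVpos : p ≤ Module.finrank ℝ ↥(Vpos Mm) + n := by
    have htop : Module.finrank ℝ ↥(⊤ : Submodule ℝ (Fin p → ℝ)) = p := by simp
    have h1 : Module.finrank ℝ ↥(⊤ : Submodule ℝ (Fin p → ℝ)) ≤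
        Module.finrank ℝ ↥(Vpos Mm ⊔ (Vzero Mm ⊔ Vneg Mm)) :=
      Submodule.finrank_mono top_le_vsup
    have h2 := Submodule.finrank_sup_add_finrank_inf_eq (Vpos Mm) (Vzero Mm ⊔ Vneg Mm)
    omega
  -- dimension of T
  have hdimT : Module.finrank ℝ ↥T = n := by
    have h1 := Submodule.finrank_sup_add_finrank_inf_eq G ((Vpos Mm).map L)
    rw [hinf] at h1
    simp only [finrank_bot, add_zero] at h1
    have h2 := finrank_map_of_inj L hLinj (Vpos Mm)
    have hle := finrank_le_of_nonneg T hq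
    rw [← hT] at h1
    omega
  -- monotonicity
  constructor
  · rw [hTset]
    intro a ha b hb
    have : a - b ∈ T := T.sub_mem ha hb
    exact hq _ this
  -- maximality
  · intro a ha
    rw [hTset] at ha ⊢
    by_contra haT
    set T' : Submodule ℝ ((Fin n → ℝ) × (Fin n → ℝ)) := T ⊔ Submodule.span ℝ {a} with hT'
    have hq' : ∀ z ∈ T', 0 ≤ z.1 ⬝ᵥ z.2 := by
      intro z hz
      rcases Submodule.mem_sup.1 hz with ⟨w, hw, s, hs, rfl⟩
      rcases Submodule.mem_span_singleton.1 hs with ⟨t, rfl⟩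
      by_cases ht : t = 0
      · rw [ht, zero_smul, add_zero]
        exact hq w hw
      · have hbmem : -(t⁻¹ • w) ∈ T := T.neg_mem (T.smul_mem _ hw)
        have key := ha _ hbmem
        have hrw : a.1 - (-(t⁻¹ • w)).1 = (a + t⁻¹ • w).1 := by
          simp [Prod.fst_add, sub_neg_eq_add]
        have hrw2 : a.2 - (-(t⁻¹ • w)).2 = (a + t⁻¹ • w).2 := by
          simp [Prod.snd_add, sub_neg_eq_add]
        rw [hrw, hrw2] at key
        have hzeq : w + t • a = t • (a + t⁻¹ • w) := by
          rw [smul_add, smul_smul, mul_inv_cancel₀ ht, one_smul, add_comm]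
        rw [hzeq]
        have hsmul1 : (t • (a + t⁻¹ • w)).1 = t • (a + t⁻¹ • w).1 := rfl
        have hsmul2 : (t • (a + t⁻¹ • w)).2 = t • (a + t⁻¹ • w).2 := rfl
        rw [hsmul1, hsmul2, smul_dotProduct, dotProduct_smul]
        have ht2 : (0:ℝ) ≤ t * t := mul_self_nonneg t
        rw [smul_eq_mul, smul_eq_mul, ← mul_assoc]
        exact mul_nonneg ht2 key
    have hle := finrank_le_of_nonneg T' hq'
    have haT' : a ∈ T' := Submodule.mem_sup_right (Submodule.mem_span_singleton_self a)
    have hlt : T < T' := lt_of_le_of_ne le_sup_left (fun h => haT (h ▸ haT'))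
    have := Submodule.finrank_lt_finrank_of_lt hlt
    omega
end

section
/- Let n, p ∈ ℕ, let A, B ∈ ℝ^{p×n}, assume the p×2n matrix (A B) has rank p, and let G be the linear relation with graph gra G = {(x,x*) ∈ ℝⁿ × ℝⁿ : Ax + Bx* = 0}. Then the following are equivalent: (i) G is maximally monotone; (ii) p = n and G is monotone; (iii) p = n and the symmetric matrix ABᵀ + BAᵀ is negative semidefinite. -/
open Matrix Pointwise

section Aux
open Module
variable {n : ℕ}

private lemma dpsn (x : Fin n → ℝ) : 0 ≤ x ⬝ᵥ x :=
  Finset.sum_nonneg fun i _ => mul_self_nonneg _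

private lemma mono_of_pointwise (S : Submodule ℝ ((Fin n → ℝ) × (Fin n → ℝ)))
    (h : ∀ q ∈ S, 0 ≤ q.1 ⬝ᵥ q.2) : IsMonotoneSet (S : Set ((Fin n → ℝ) × (Fin n → ℝ))) := by
  intro a ha b hb
  simpa using h (a - b) (S.sub_mem ha hb)

private lemma pointwise_of_mono (S : Submodule ℝ ((Fin n → ℝ) × (Fin n → ℝ)))
    (h : IsMonotoneSet (S : Set ((Fin n → ℝ) × (Fin n → ℝ)))) : ∀ q ∈ S, 0 ≤ q.1 ⬝ᵥ q.2 := by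
  intro q hq
  simpa using h q hq 0 S.zero_mem

private lemma finrank_le_of_mono (S : Submodule ℝ ((Fin n → ℝ) × (Fin n → ℝ)))
    (h : ∀ q ∈ S, 0 ≤ q.1 ⬝ᵥ q.2) : finrank ℝ S ≤ n := by
  have hinj : Function.Injective
      (((LinearMap.fst ℝ (Fin n → ℝ) (Fin n → ℝ)) + (LinearMap.snd ℝ _ _)).comp S.subtype) := by
    rw [← LinearMap.ker_eq_bot, LinearMap.ker_eq_bot']
    intro m hm
    have hm' : (m : (Fin n → ℝ) × (Fin n → ℝ)).1 + (m : (Fin n → ℝ) × (Fin n → ℝ)).2 = 0 := by simpa using hm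
    have h2 : (m : (Fin n → ℝ) × (Fin n → ℝ)).2 = -(m : (Fin n → ℝ) × (Fin n → ℝ)).1 :=
      eq_neg_of_add_eq_zero_right hm'
    have h0 := h m m.2
    rw [h2] at h0
    have h1 : (m : (Fin n → ℝ) × (Fin n → ℝ)).1 = 0 := by
      have hle : (m : (Fin n → ℝ) × (Fin n → ℝ)).1 ⬝ᵥ (m : (Fin n → ℝ) × (Fin n → ℝ)).1 ≤ 0 := by
        simpa [dotProduct_neg] using h0
      exact dotProduct_self_eq_zero.mp (le_antisymm hle (dpsn _))
    have : (m : (Fin n → ℝ) × (Fin n → ℝ)) = 0 := by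
      ext1
      · simp [h1]
      · simp [h2, h1]
    exact Subtype.ext this
  simpa [Module.finrank_fin_fun] using LinearMap.finrank_le_finrank_of_injective hinj

private lemma max_of_dim (S : Submodule ℝ ((Fin n → ℝ) × (Fin n → ℝ)))
    (h : ∀ q ∈ S, 0 ≤ q.1 ⬝ᵥ q.2) (hd : n ≤ finrank ℝ S) :
    IsMaxMonotoneSet (S : Set ((Fin n → ℝ) × (Fin n → ℝ))) := by
  refine ⟨mono_of_pointwise S h, ?_⟩
  intro a ha
  set S' := S ⊔ (ℝ ∙ a) with hS'
  have h' : ∀ q ∈ S', 0 ≤ q.1 ⬝ᵥ q.2 := by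
    intro q hq
    rw [hS', Submodule.mem_sup] at hq
    obtain ⟨s, hs, z, hz, rfl⟩ := hq
    obtain ⟨t, rfl⟩ := Submodule.mem_span_singleton.mp hz
    rcases eq_or_ne t 0 with rfl | ht
    · simpa using h s hs
    · have hb := ha ((-t⁻¹) • s) (S.smul_mem _ hs)
      have e2 : (a.1 - ((-t⁻¹) • s).1) ⬝ᵥ (a.2 - ((-t⁻¹) • s).2)
          = a.1 ⬝ᵥ a.2 + t⁻¹ * (a.1 ⬝ᵥ s.2) + t⁻¹ * (s.1 ⬝ᵥ a.2)
            + (t⁻¹ * t⁻¹) * (s.1 ⬝ᵥ s.2) := by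
        simp only [Prod.smul_fst, Prod.smul_snd, sub_dotProduct,
          dotProduct_sub, smul_dotProduct, dotProduct_smul,
          smul_eq_mul]
        ring
      rw [e2] at hb
      have e1 : (s + t • a).1 ⬝ᵥ (s + t • a).2
          = s.1 ⬝ᵥ s.2 + t * (s.1 ⬝ᵥ a.2) + t * (a.1 ⬝ᵥ s.2) + (t * t) * (a.1 ⬝ᵥ a.2) := by
        simp only [Prod.fst_add, Prod.snd_add, Prod.smul_fst, Prod.smul_snd,
          add_dotProduct, dotProduct_add, smul_dotProduct,
          dotProduct_smul, smul_eq_mul]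
        ring
      rw [e1]
      have key : 0 ≤ (t * t) * (a.1 ⬝ᵥ a.2 + t⁻¹ * (a.1 ⬝ᵥ s.2) + t⁻¹ * (s.1 ⬝ᵥ a.2)
            + (t⁻¹ * t⁻¹) * (s.1 ⬝ᵥ s.2)) :=
        mul_nonneg (mul_self_nonneg t) hb
      have expand : (t * t) * (a.1 ⬝ᵥ a.2 + t⁻¹ * (a.1 ⬝ᵥ s.2) + t⁻¹ * (s.1 ⬝ᵥ a.2)
            + (t⁻¹ * t⁻¹) * (s.1 ⬝ᵥ s.2))
          = s.1 ⬝ᵥ s.2 + t * (s.1 ⬝ᵥ a.2) + t * (a.1 ⬝ᵥ s.2) + (t * t) * (a.1 ⬝ᵥ a.2) := by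
        field_simp
        ring
      rw [expand] at key
      linarith
  have hle : finrank ℝ S' ≤ n := finrank_le_of_mono S' h'
  have : S = S' := Submodule.eq_of_le_of_finrank_le le_sup_left (hle.trans hd)
  rw [SetLike.mem_coe, this, hS']
  exact Submodule.mem_sup_right (Submodule.mem_span_singleton_self a)

private lemma dim_ge_of_max (S : Submodule ℝ ((Fin n → ℝ) × (Fin n → ℝ)))
    (h : IsMaxMonotoneSet (S : Set ((Fin n → ℝ) × (Fin n → ℝ)))) : n ≤ finrank ℝ S := by
  by_contra hlt
  push_neg at hlt
  set W := S.map ((LinearMap.fst ℝ (Fin n → ℝ) (Fin n → ℝ)) + (LinearMap.snd ℝ _ _)) with hWdef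
  have hW : finrank ℝ W < n := lt_of_le_of_lt (Submodule.finrank_map_le _ _) hlt
  have hWtop : W < ⊤ := by
    rcases lt_or_eq_of_le (le_top (a := W)) with h' | h'
    · exact h'
    · rw [h'] at hW
      rw [finrank_top, Module.finrank_fin_fun] at hW
      exact absurd hW (lt_irrefl n)
  obtain ⟨f, hf0, hfW⟩ := Submodule.exists_dual_map_eq_bot_of_lt_top hWtop inferInstance
  set c : Fin n → ℝ := fun i => f (fun j => if i = j then 1 else 0) with hc
  have hfc : ∀ v, f v = v ⬝ᵥ c := by
    intro v
    rw [LinearMap.pi_apply_eq_sum_univ f v]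
    simp [dotProduct, hc, smul_eq_mul]
  have hfW' : ∀ w ∈ W, w ⬝ᵥ c = 0 := by
    intro w hw
    have : f w ∈ W.map f := Submodule.mem_map_of_mem hw
    rw [hfW, Submodule.mem_bot] at this
    rwa [hfc] at this
  have hc0 : c ≠ 0 := by
    intro hcz
    apply hf0
    apply LinearMap.ext
    intro v
    rw [hfc v, hcz]
    simp
  have hcS : ((c, c) : (Fin n → ℝ) × (Fin n → ℝ)) ∈ S := by
    apply h.2
    intro b hb
    have hbp : 0 ≤ b.1 ⬝ᵥ b.2 := pointwise_of_mono S h.1 b hb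
    have hw : b.1 + b.2 ∈ W := ⟨b, hb, rfl⟩
    have hzero := hfW' _ hw
    rw [add_dotProduct] at hzero
    have comm1 : c ⬝ᵥ b.1 = b.1 ⬝ᵥ c := dotProduct_comm _ _
    have comm2 : c ⬝ᵥ b.2 = b.2 ⬝ᵥ c := dotProduct_comm _ _
    have e : ((c, c) : (Fin n → ℝ) × (Fin n → ℝ)).1 - b.1 = c - b.1 := rfl
    simp only [sub_dotProduct, dotProduct_sub]
    have hcc := dpsn c
    linarith
  have hw2 : c + c ∈ W := ⟨(c, c), hcS, rfl⟩
  have := hfW' _ hw2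
  rw [add_dotProduct] at this
  have hcc0 : c ⬝ᵥ c = 0 := by linarith
  exact hc0 (dotProduct_self_eq_zero.mp hcc0)

private lemma adj_nonneg (S : Submodule ℝ ((Fin n → ℝ) × (Fin n → ℝ)))
    (h : IsMaxMonotoneSet (S : Set ((Fin n → ℝ) × (Fin n → ℝ))))
    (q : (Fin n → ℝ) × (Fin n → ℝ)) (hq : ∀ g ∈ S, q.2 ⬝ᵥ g.1 - q.1 ⬝ᵥ g.2 = 0) :
    0 ≤ q.1 ⬝ᵥ q.2 := by
  by_contra hneg
  push_neg at hneg
  have hmem : ((q.1, -q.2) : (Fin n → ℝ) × (Fin n → ℝ)) ∈ S := by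
    apply h.2
    intro b hb
    have hbp : 0 ≤ b.1 ⬝ᵥ b.2 := pointwise_of_mono S h.1 b hb
    have hcross := hq b hb
    have comm : b.1 ⬝ᵥ q.2 = q.2 ⬝ᵥ b.1 := dotProduct_comm _ _
    simp only [sub_dotProduct, dotProduct_sub, dotProduct_neg,
      neg_dotProduct]
    linarith
  have h2 := hq _ hmem
  have comm : q.2 ⬝ᵥ q.1 = q.1 ⬝ᵥ q.2 := dotProduct_comm _ _
  simp only [dotProduct_neg] at h2
  linarith

end Aux

open Module in
/-- the following are equivalent: (i) `G` is maximally monotone;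
(ii) `p = n` and `G` is monotone; (iii) `p = n` and `ABᵀ + BAᵀ` is negative semidefinite. -/
theorem stmt13 {n p : ℕ} (A B : Matrix (Fin p) (Fin n) ℝ)
    (hrank : (Matrix.fromCols A B).rank = p) :
    (IsMaxMonotoneSet {q : (Fin n → ℝ) × (Fin n → ℝ) | A *ᵥ q.1 + B *ᵥ q.2 = 0} ↔
      (p = n ∧ IsMonotoneSet {q : (Fin n → ℝ) × (Fin n → ℝ) | A *ᵥ q.1 + B *ᵥ q.2 = 0})) ∧
    ((p = n ∧ IsMonotoneSet {q : (Fin n → ℝ) × (Fin n → ℝ) | A *ᵥ q.1 + B *ᵥ q.2 = 0}) ↔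
      (p = n ∧ (-(A * Bᵀ + B * Aᵀ)).PosSemidef)) := by
  classical
  set L : ((Fin n → ℝ) × (Fin n → ℝ)) →ₗ[ℝ] (Fin p → ℝ) :=
    (Matrix.mulVecLin A).comp (LinearMap.fst ℝ _ _)
      + (Matrix.mulVecLin B).comp (LinearMap.snd ℝ _ _) with hL
  have hLapp : ∀ q : (Fin n → ℝ) × (Fin n → ℝ), L q = A *ᵥ q.1 + B *ᵥ q.2 := fun q => rfl
  have hset : {q : (Fin n → ℝ) × (Fin n → ℝ) | A *ᵥ q.1 + B *ᵥ q.2 = 0}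
      = ((LinearMap.ker L : Submodule ℝ _) : Set ((Fin n → ℝ) × (Fin n → ℝ))) := by
    ext q
    simp [LinearMap.mem_ker, hLapp]
  rw [hset]
  set S := LinearMap.ker L with hS
  have hsurj : LinearMap.range L = ⊤ := by
    have h1 : LinearMap.range (Matrix.mulVecLin (fromCols A B)) = ⊤ := by
      apply Submodule.eq_top_of_finrank_eq
      rw [Module.finrank_fin_fun]
      exact hrank
    rw [LinearMap.range_eq_top] at h1 ⊢
    intro y
    obtain ⟨v, hv⟩ := h1 y
    refine ⟨(v ∘ Sum.inl, v ∘ Sum.inr), ?_⟩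
    rw [hLapp, ← Matrix.fromCols_mulVec_sumElim, Sum.elim_comp_inl_inr]
    exact hv
  have hdim : p + finrank ℝ S = n + n := by
    have h2 := LinearMap.finrank_range_add_finrank_ker L
    rw [hsurj, finrank_top, Module.finrank_fin_fun, Module.finrank_prod,
      Module.finrank_fin_fun] at h2
    exact h2
  have e1 : ∀ u : Fin p → ℝ, u ⬝ᵥ ((A * Bᵀ) *ᵥ u) = (Aᵀ *ᵥ u) ⬝ᵥ (Bᵀ *ᵥ u) := by
    intro u
    rw [← Matrix.mulVec_mulVec, Matrix.dotProduct_mulVec, ← Matrix.mulVec_transpose]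
  have e2 : ∀ u : Fin p → ℝ, u ⬝ᵥ ((B * Aᵀ) *ᵥ u) = (Bᵀ *ᵥ u) ⬝ᵥ (Aᵀ *ᵥ u) := by
    intro u
    rw [← Matrix.mulVec_mulVec, Matrix.dotProduct_mulVec, ← Matrix.mulVec_transpose]
  have hadj : ∀ (u : Fin p → ℝ), ∀ g ∈ S,
      (-(Aᵀ *ᵥ u)) ⬝ᵥ g.1 - (Bᵀ *ᵥ u) ⬝ᵥ g.2 = 0 := by
    intro u g hg
    have hg' : A *ᵥ g.1 + B *ᵥ g.2 = 0 := by rwa [hS, LinearMap.mem_ker, hLapp] at hg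
    have c1 : (Aᵀ *ᵥ u) ⬝ᵥ g.1 = u ⬝ᵥ (A *ᵥ g.1) := by
      rw [Matrix.mulVec_transpose, ← Matrix.dotProduct_mulVec]
    have c2 : (Bᵀ *ᵥ u) ⬝ᵥ g.2 = u ⬝ᵥ (B *ᵥ g.2) := by
      rw [Matrix.mulVec_transpose, ← Matrix.dotProduct_mulVec]
    rw [neg_dotProduct, c1, c2, sub_eq_add_neg, ← neg_add, ← dotProduct_add, hg',
      dotProduct_zero, neg_zero]
  constructor
  · constructor
    · intro hmax
      have hge := dim_ge_of_max S hmax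
      have hle := finrank_le_of_mono S (pointwise_of_mono S hmax.1)
      exact ⟨by omega, hmax.1⟩
    · rintro ⟨hp, hm⟩
      exact max_of_dim S (pointwise_of_mono S hm) (by omega)
  · constructor
    · rintro ⟨hp, hm⟩
      refine ⟨hp, ?_⟩
      have hmax : IsMaxMonotoneSet (S : Set ((Fin n → ℝ) × (Fin n → ℝ))) :=
        max_of_dim S (pointwise_of_mono S hm) (by omega)
      refine Matrix.PosSemidef.of_dotProduct_mulVec_nonneg ?_ ?_
      · have ht : (A * Bᵀ + B * Aᵀ)ᵀ = A * Bᵀ + B * Aᵀ := by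
          rw [Matrix.transpose_add, Matrix.transpose_mul, Matrix.transpose_mul,
            Matrix.transpose_transpose, Matrix.transpose_transpose, add_comm]
        show (-(A * Bᵀ + B * Aᵀ))ᴴ = _
        rw [Matrix.conjTranspose_neg, Matrix.conjTranspose_eq_transpose_of_trivial, ht]
      · intro x
        have h0 := adj_nonneg S hmax (Bᵀ *ᵥ x, -(Aᵀ *ᵥ x)) (fun g hg => hadj x g hg)
        have comm : (Aᵀ *ᵥ x) ⬝ᵥ (Bᵀ *ᵥ x) = (Bᵀ *ᵥ x) ⬝ᵥ (Aᵀ *ᵥ x) :=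
          dotProduct_comm _ _
        simp only [dotProduct_neg] at h0
        rw [star_trivial, Matrix.neg_mulVec, dotProduct_neg, Matrix.add_mulVec,
          dotProduct_add, e1 x, e2 x]
        linarith
    · rintro ⟨hp, hpsd⟩
      refine ⟨hp, ?_⟩
      set F : (Fin p → ℝ) →ₗ[ℝ] ((Fin n → ℝ) × (Fin n → ℝ)) :=
        LinearMap.prod (Matrix.mulVecLin Bᵀ) (-(Matrix.mulVecLin Aᵀ)) with hF
      have hFapp : ∀ u, F u = (Bᵀ *ᵥ u, -(Aᵀ *ᵥ u)) := fun u => rfl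
      set T := LinearMap.range F with hT
      have hTpt : ∀ q ∈ T, 0 ≤ q.1 ⬝ᵥ q.2 := by
        rintro q ⟨u, rfl⟩
        rw [hFapp]
        have hx := hpsd.dotProduct_mulVec_nonneg u
        rw [star_trivial, Matrix.neg_mulVec, dotProduct_neg, Matrix.add_mulVec,
          dotProduct_add, e1 u, e2 u] at hx
        have comm : (Aᵀ *ᵥ u) ⬝ᵥ (Bᵀ *ᵥ u) = (Bᵀ *ᵥ u) ⬝ᵥ (Aᵀ *ᵥ u) :=
          dotProduct_comm _ _
        show 0 ≤ (Bᵀ *ᵥ u) ⬝ᵥ (-(Aᵀ *ᵥ u))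
        rw [dotProduct_neg]
        linarith
      have hMt : Function.Injective (Matrix.mulVecLin (fromCols A B)ᵀ) := by
        rw [← LinearMap.ker_eq_bot]
        have h3 := LinearMap.finrank_range_add_finrank_ker
          (Matrix.mulVecLin (fromCols A B)ᵀ)
        have h4 : finrank ℝ (LinearMap.range (Matrix.mulVecLin (fromCols A B)ᵀ)) = p := by
          have h5 := Matrix.rank_transpose (fromCols A B)
          rw [hrank] at h5
          exact h5
        rw [h4, Module.finrank_fin_fun] at h3
        exact Submodule.finrank_eq_zero.mp (by omega)
      have hFinj : Function.Injective F := by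
        rw [← LinearMap.ker_eq_bot, LinearMap.ker_eq_bot']
        intro u hu
        rw [hFapp] at hu
        have h1 : Bᵀ *ᵥ u = 0 := congrArg Prod.fst hu
        have h2 : Aᵀ *ᵥ u = 0 := by
          have := congrArg Prod.snd hu
          simpa using this
        apply hMt
        rw [map_zero]
        show (fromCols A B)ᵀ *ᵥ u = 0
        rw [Matrix.transpose_fromCols, Matrix.fromRows_mulVec, h1, h2]
        ext (i | i) <;> rfl
      have hTrank : finrank ℝ T = p := by
        rw [hT, LinearMap.finrank_range_of_inj hFinj, Module.finrank_fin_fun]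
      have hTmax : IsMaxMonotoneSet (T : Set ((Fin n → ℝ) × (Fin n → ℝ))) :=
        max_of_dim T hTpt (by omega)
      apply mono_of_pointwise S
      intro q hq
      apply adj_nonneg T hTmax q
      rintro g ⟨u, rfl⟩
      rw [hFapp]
      have hq' : A *ᵥ q.1 + B *ᵥ q.2 = 0 := by rwa [hS, LinearMap.mem_ker, hLapp] at hq
      have d1 : q.2 ⬝ᵥ (Bᵀ *ᵥ u) = (B *ᵥ q.2) ⬝ᵥ u := by
        rw [Matrix.dotProduct_mulVec, Matrix.vecMul_transpose]
      have d2 : q.1 ⬝ᵥ (Aᵀ *ᵥ u) = (A *ᵥ q.1) ⬝ᵥ u := by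
        rw [Matrix.dotProduct_mulVec, Matrix.vecMul_transpose]
      show q.2 ⬝ᵥ (Bᵀ *ᵥ u) - q.1 ⬝ᵥ (-(Aᵀ *ᵥ u)) = 0
      rw [dotProduct_neg, sub_neg_eq_add, d1, d2, ← add_dotProduct, add_comm,
        hq', zero_dotProduct]
end
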